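/- arXiv:2212.02768 — 7 statements merged into one kernel-verified Lean document; each statement's English description precedes it below -/
import Mathlib

section
/- Let n ≥ 3 and let Φ be a uniformly random proper 3-coloring of the n-node cycle. For any two vertices at distance d (where 1 ≤ d ≤ n-1), the probability that Φ assigns them the same color equals (2^d + 2(-1)^d)(2^{n-d} + 2(-1)^{n-d}) / (3(2^n + 2(-1)^n)). -/
open Finset

def stepCount (m : ℕ) (c : ZMod 3) : ℕ :=
  (Finset.univ.filter (fun s : Fin m → ZMod 3 => (∀ i, s i ≠ 0) ∧ ∑ i, s i = c)).card

lemma stepCount_cons (m : ℕ) (c a : ZMod 3) (ha : a ≠ 0) :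
    (Finset.univ.filter (fun s : Fin (m+1) → ZMod 3 =>
      ((∀ i, s i ≠ 0) ∧ ∑ i, s i = c) ∧ s 0 = a)).card = stepCount m (c - a) := by
  apply Finset.card_nbij' (fun s => fun i => s i.succ) (fun t => Fin.cons a t)
  · intro s hs
    simp only [Finset.mem_coe, mem_filter, mem_univ, true_and] at hs ⊢
    obtain ⟨⟨h1, h2⟩, h3⟩ := hs
    refine ⟨fun i => h1 i.succ, ?_⟩
    rw [Fin.sum_univ_succ, h3] at h2
    linear_combination h2
  · intro t ht
    simp only [Finset.mem_coe, mem_filter, mem_univ, true_and] at ht ⊢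
    obtain ⟨h1, h2⟩ := ht
    refine ⟨⟨?_, ?_⟩, by simp⟩
    · intro i
      refine Fin.cases ?_ ?_ i
      · simpa using ha
      · intro j; simpa using h1 j
    · rw [Fin.sum_univ_succ]
      simp [h2]
  · intro s hs
    simp only [Finset.mem_coe, mem_filter, mem_univ, true_and] at hs
    funext i
    refine Fin.cases ?_ (fun j => ?_) i
    · simpa using hs.2.symm
    · simp
  · intro t _
    funext i
    simp [Fin.cons_succ]

lemma stepCount_succ (m : ℕ) (c : ZMod 3) :
    stepCount (m+1) c = stepCount m (c-1) + stepCount m (c-2) := by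
  rw [← stepCount_cons m c 1 (by decide), ← stepCount_cons m c 2 (by decide)]
  rw [stepCount, ← Finset.card_union_of_disjoint]
  · congr 1
    ext s
    simp only [mem_filter, mem_univ, true_and, mem_union]
    constructor
    · rintro ⟨h1, h2⟩
      have : s 0 = 1 ∨ s 0 = 2 := by
        have h := h1 0
        have : ∀ x : ZMod 3, x ≠ 0 → x = 1 ∨ x = 2 := by decide
        exact this _ h
      rcases this with h | h
      · exact Or.inl ⟨⟨h1, h2⟩, h⟩
      · exact Or.inr ⟨⟨h1, h2⟩, h⟩
    · rintro (⟨h, _⟩ | ⟨h, _⟩) <;> exact h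
  · rw [Finset.disjoint_filter]
    rintro s _ ⟨_, h1⟩ ⟨_, h2⟩
    rw [h1] at h2; exact absurd h2 (by decide)

lemma stepCount_zero : stepCount 0 0 = 1 ∧ stepCount 0 1 = 0 ∧ stepCount 0 2 = 0 := by
  refine ⟨?_, ?_, ?_⟩ <;> · rw [stepCount]; decide

lemma stepCount_closed (m : ℕ) :
    (3:ℤ) * stepCount m 0 = 2^m + 2*(-1)^m ∧ (3:ℤ) * stepCount m 1 = 2^m - (-1)^m
      ∧ (3:ℤ) * stepCount m 2 = 2^m - (-1)^m := by
  induction m with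
  | zero => simp [stepCount_zero.1, stepCount_zero.2.1, stepCount_zero.2.2]
  | succ k ih =>
    obtain ⟨i0, i1, i2⟩ := ih
    have e00 : (0:ZMod 3) - 1 = 2 := by decide
    have e01 : (0:ZMod 3) - 2 = 1 := by decide
    have e10 : (1:ZMod 3) - 1 = 0 := by decide
    have e11 : (1:ZMod 3) - 2 = 2 := by decide
    have e20 : (2:ZMod 3) - 1 = 1 := by decide
    have e21 : (2:ZMod 3) - 2 = 0 := by decide
    refine ⟨?_, ?_, ?_⟩
    · rw [stepCount_succ, e00, e01]; push_cast; rw [pow_succ, pow_succ]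
      linear_combination i1 + i2
    · rw [stepCount_succ, e10, e11]; push_cast; rw [pow_succ, pow_succ]
      linear_combination i0 + i2
    · rw [stepCount_succ, e20, e21]; push_cast; rw [pow_succ, pow_succ]
      linear_combination i0 + i1
open Finset

def extendS {m : ℕ} (s : Fin m → ZMod 3) : ℕ → ZMod 3 :=
  fun k => if h : k < m then s ⟨k, h⟩ else 0

lemma sum_extendS {m : ℕ} (s : Fin m → ZMod 3) :
    ∑ i ∈ Finset.range m, extendS s i = ∑ i, s i := by
  rw [Finset.sum_range]
  simp [extendS]

noncomputable section
variable {n : ℕ} [NeZero n]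

def enc (u : ZMod n) (φ : ZMod n → ZMod 3) : ZMod 3 × (Fin n → ZMod 3) :=
  (φ u, fun i => φ (u + ((i.1 + 1 : ℕ) : ZMod n)) - φ (u + ((i.1 : ℕ) : ZMod n)))

def dec (u : ZMod n) (p : ZMod 3 × (Fin n → ZMod 3)) : ZMod n → ZMod 3 :=
  fun v => p.1 + ∑ i ∈ Finset.range ((v - u).val), extendS p.2 i

lemma enc_partial (u : ZMod n) (φ : ZMod n → ZMod 3) (k : ℕ) (hk : k ≤ n) :
    ∑ i ∈ Finset.range k, extendS (enc u φ).2 i = φ (u + (k : ZMod n)) - φ u := by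
  have h : ∀ i ∈ Finset.range k, extendS (enc u φ).2 i
      = φ (u + ((i + 1 : ℕ) : ZMod n)) - φ (u + ((i : ℕ) : ZMod n)) := by
    intro i hi
    have hin : i < n := lt_of_lt_of_le (Finset.mem_range.mp hi) hk
    simp [extendS, enc, dif_pos hin]
  rw [Finset.sum_congr rfl h, Finset.sum_range_sub (fun j => φ (u + ((j : ℕ) : ZMod n)))]
  simp

lemma enc_total (u : ZMod n) (φ : ZMod n → ZMod 3) : ∑ i, (enc u φ).2 i = 0 := by
  rw [← sum_extendS, enc_partial u φ n le_rfl, ZMod.natCast_self]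
  simp

lemma dec_apply (u : ZMod n) (p : ZMod 3 × (Fin n → ZMod 3)) (k : ℕ) (hk : k < n) :
    dec u p (u + (k : ZMod n)) = p.1 + ∑ i ∈ Finset.range k, extendS p.2 i := by
  unfold dec
  rw [add_sub_cancel_left, ZMod.val_cast_of_lt hk]

lemma dec_step (u : ZMod n) (p : ZMod 3 × (Fin n → ZMod 3)) (hsum : ∑ i, p.2 i = 0)
    (v : ZMod n) :
    dec u p (v + 1) - dec u p v = extendS p.2 ((v - u).val) := by
  unfold dec
  have hw : v + 1 - u = (v - u) + 1 := by ring
  have hv : (v - u).val < n := ZMod.val_lt _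
  rw [hw]
  by_cases h : (v - u).val + 1 < n
  · have h1 : (v - u) + 1 = (((v - u).val + 1 : ℕ) : ZMod n) := by
      push_cast [ZMod.natCast_val, ZMod.cast_id]
      ring
    rw [h1, ZMod.val_cast_of_lt h, Finset.sum_range_succ]
    ring
  · have hne : (v - u).val + 1 = n := by omega
    have h1 : (v - u) + 1 = 0 := by
      have : ((v - u).val + 1 : ℕ) = (n : ℕ) := hne
      have h2 : (v - u) + 1 = (((v - u).val + 1 : ℕ) : ZMod n) := by
        push_cast [ZMod.natCast_val, ZMod.cast_id]
        ring
      rw [h2, this, ZMod.natCast_self]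
    rw [h1, ZMod.val_zero]
    have htot : ∑ i ∈ Finset.range n, extendS p.2 i = 0 := by
      rw [sum_extendS]; exact hsum
    have htot' : ∑ i ∈ Finset.range ((v - u).val + 1), extendS p.2 i = 0 := by
      rw [hne]; exact htot
    rw [Finset.sum_range_succ] at htot'
    simp only [Finset.range_zero, Finset.sum_empty]
    linear_combination -htot'

lemma dec_enc (u : ZMod n) (φ : ZMod n → ZMod 3) : dec u (enc u φ) = φ := by
  funext v
  have hval : (v - u).val ≤ n := le_of_lt (ZMod.val_lt _)
  show φ u + ∑ i ∈ Finset.range ((v - u).val), extendS (enc u φ).2 i = φ v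
  rw [enc_partial u φ _ hval, ZMod.natCast_val, ZMod.cast_id]
  ring_nf

lemma enc_dec (u : ZMod n) (p : ZMod 3 × (Fin n → ZMod 3)) (hsum : ∑ i, p.2 i = 0) :
    enc u (dec u p) = p := by
  unfold enc
  have h1 : dec u p u = p.1 := by
    have := dec_apply u p 0 (Nat.pos_of_ne_zero (NeZero.ne n))
    simpa using this
  refine Prod.ext ?_ ?_
  · exact h1
  · funext i
    have hiv : (i.1 : ℕ) < n := i.2
    have hstep := dec_step u p hsum (u + ((i.1 : ℕ) : ZMod n))
    have hidx : ((u + ((i.1 : ℕ) : ZMod n)) - u).val = i.1 := by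
      rw [add_sub_cancel_left, ZMod.val_cast_of_lt hiv]
    rw [hidx] at hstep
    show dec u p (u + ((i.1 + 1 : ℕ) : ZMod n)) - dec u p (u + ((i.1 : ℕ) : ZMod n)) = p.2 i
    have hc : ((i.1 + 1 : ℕ) : ZMod n) = ((i.1 : ℕ) : ZMod n) + 1 := by push_cast; ring
    rw [hc, ← add_assoc, hstep]
    simp [extendS, dif_pos hiv]

end
lemma split_card (n d : ℕ) (hd : d ≤ n) :
    (Finset.univ.filter (fun s : Fin n → ZMod 3 =>
      (∀ i, s i ≠ 0) ∧ (∑ i ∈ Finset.range d, extendS s i = 0)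
        ∧ (∑ i ∈ Finset.range (n-d), extendS s (d+i) = 0))).card
    = ((Finset.univ.filter (fun s : Fin d → ZMod 3 => (∀ i, s i ≠ 0) ∧ ∑ i, s i = 0)).card)
      * ((Finset.univ.filter (fun s : Fin (n-d) → ZMod 3 => (∀ i, s i ≠ 0) ∧ ∑ i, s i = 0)).card) := by
  rw [← Finset.card_product]
  apply Finset.card_nbij'
    (fun s => (fun j : Fin d => s ⟨j.1, lt_of_lt_of_le j.2 hd⟩,
               fun j : Fin (n-d) => s ⟨d + j.1, by omega⟩))
    (fun q => fun i : Fin n => if h : i.1 < d then q.1 ⟨i.1, h⟩ else q.2 ⟨i.1 - d, by omega⟩)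
  · intro s hs
    simp only [Finset.mem_coe, mem_filter, mem_univ, true_and, Finset.mem_product] at hs ⊢
    obtain ⟨h1, h2, h3⟩ := hs
    refine ⟨⟨fun j => h1 _, ?_⟩, ⟨fun j => h1 _, ?_⟩⟩
    · rw [← h2, Finset.sum_range]
      apply Finset.sum_congr rfl
      intro j _
      simp [extendS, dif_pos (lt_of_lt_of_le j.2 hd)]
    · rw [← h3, Finset.sum_range]
      apply Finset.sum_congr rfl
      intro j _
      have : d + j.1 < n := by omega
      simp [extendS, dif_pos this]
  · intro q hq
    simp only [Finset.mem_coe, mem_filter, mem_univ, true_and, Finset.mem_product] at hq ⊢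
    obtain ⟨⟨h1, h2⟩, h3, h4⟩ := hq
    refine ⟨?_, ?_, ?_⟩
    · intro i
      by_cases h : i.1 < d
      · simpa [dif_pos h] using h1 _
      · simpa [dif_neg h] using h3 _
    · rw [← h2, Finset.sum_range]
      apply Finset.sum_congr rfl
      intro j _
      simp [extendS, dif_pos (lt_of_lt_of_le j.2 hd), dif_pos j.2]
    · rw [← h4, Finset.sum_range]
      apply Finset.sum_congr rfl
      intro j _
      have hjn : d + j.1 < n := by omega
      have hnd : ¬ (d + j.1 < d) := by omega
      simp only [extendS, dif_pos hjn, dif_neg hnd]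
      congr 1
      exact Fin.ext (by simp)
  · intro s _
    funext i
    by_cases h : i.1 < d
    · simp only [dif_pos h]
    · simp only [dif_neg h]
      congr 1
      exact Fin.ext (by simp; omega)
  · intro q _
    refine Prod.ext ?_ ?_ <;> funext j
    · have : (j.1 : ℕ) < d := j.2
      simp only [dif_pos this]
    · have h : ¬ (d + j.1 < d) := by omega
      simp only [dif_neg h]
      congr 1
      exact Fin.ext (by simp)

lemma sum_range_split (n d : ℕ) (hd : d ≤ n) (f : ℕ → ZMod 3) :
    ∑ i ∈ Finset.range n, f i
      = ∑ i ∈ Finset.range d, f i + ∑ i ∈ Finset.range (n-d), f (d+i) := by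
  have h : n = d + (n - d) := by omega
  calc ∑ i ∈ Finset.range n, f i = ∑ i ∈ Finset.range (d + (n-d)), f i := by rw [← h]
    _ = _ := Finset.sum_range_add f d (n-d)

lemma card_proper (n : ℕ) [NeZero n] (u : ZMod n) :
    (Finset.univ.filter (fun φ : ZMod n → ZMod 3 => ∀ v, φ v ≠ φ (v + 1))).card
    = 3 * stepCount n 0 := by
  have h3 : 3 * stepCount n 0
      = ((Finset.univ : Finset (ZMod 3)) ×ˢ
        (Finset.univ.filter (fun s : Fin n → ZMod 3 => (∀ i, s i ≠ 0) ∧ ∑ i, s i = 0))).card := by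
    rw [Finset.card_product, stepCount]
    norm_num
  rw [h3]
  apply Finset.card_nbij' (enc u) (dec u)
  · intro φ hφ
    simp only [Finset.mem_coe, mem_filter, mem_univ, true_and, Finset.mem_product] at hφ ⊢
    refine ⟨?_, enc_total u φ⟩
    intro i
    have hc : ((i.1 + 1 : ℕ) : ZMod n) = ((i.1 : ℕ) : ZMod n) + 1 := by push_cast; ring
    show φ (u + ((i.1 + 1 : ℕ) : ZMod n)) - φ (u + ((i.1 : ℕ) : ZMod n)) ≠ 0
    rw [hc, ← add_assoc]
    exact sub_ne_zero.mpr (Ne.symm (hφ (u + ((i.1 : ℕ) : ZMod n))))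
  · intro p hp
    simp only [Finset.mem_coe, mem_filter, mem_univ, true_and, Finset.mem_product] at hp ⊢
    obtain ⟨h1, h2⟩ := hp
    intro v
    have hstep := dec_step u p h2 v
    have hne : extendS p.2 ((v - u).val) ≠ 0 := by
      have hv : (v - u).val < n := ZMod.val_lt _
      simpa [extendS, dif_pos hv] using h1 ⟨(v - u).val, hv⟩
    rw [← hstep] at hne
    intro heq
    rw [heq] at hne
    simp at hne
  · intro φ _; exact dec_enc u φ
  · intro p hp
    simp only [Finset.mem_coe, mem_filter, mem_univ, true_and, Finset.mem_product] at hp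
    exact enc_dec u p hp.2

lemma card_proper_same (n : ℕ) [NeZero n] (u : ZMod n) (d : ℕ) (hdn : d < n) :
    (Finset.univ.filter (fun φ : ZMod n → ZMod 3 =>
      (∀ v, φ v ≠ φ (v + 1)) ∧ φ u = φ (u + (d : ZMod n)))).card
    = 3 * (stepCount d 0 * stepCount (n - d) 0) := by
  have hnd : n = d + (n - d) := by omega
  have h3 : 3 * (stepCount d 0 * stepCount (n - d) 0)
      = ((Finset.univ : Finset (ZMod 3)) ×ˢ
        (Finset.univ.filter (fun s : Fin n → ZMod 3 =>
          (∀ i, s i ≠ 0) ∧ (∑ i ∈ Finset.range d, extendS s i = 0)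
            ∧ (∑ i ∈ Finset.range (n-d), extendS s (d+i) = 0)))).card := by
    rw [Finset.card_product, split_card n d hdn.le, stepCount, stepCount]
    norm_num
  rw [h3]
  apply Finset.card_nbij' (enc u) (dec u)
  · intro φ hφ
    simp only [Finset.mem_coe, mem_filter, mem_univ, true_and, Finset.mem_product] at hφ ⊢
    obtain ⟨hp, hsame⟩ := hφ
    have hnz : ∀ i : Fin n, (enc u φ).2 i ≠ 0 := by
      intro i
      have hc : ((i.1 + 1 : ℕ) : ZMod n) = ((i.1 : ℕ) : ZMod n) + 1 := by push_cast; ring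
      show φ (u + ((i.1 + 1 : ℕ) : ZMod n)) - φ (u + ((i.1 : ℕ) : ZMod n)) ≠ 0
      rw [hc, ← add_assoc]
      exact sub_ne_zero.mpr (Ne.symm (hp (u + ((i.1 : ℕ) : ZMod n))))
    have hleft : ∑ i ∈ Finset.range d, extendS (enc u φ).2 i = 0 := by
      rw [enc_partial u φ d hdn.le, ← hsame]
      simp
    have htot : ∑ i ∈ Finset.range n, extendS (enc u φ).2 i = 0 := by
      rw [sum_extendS]; exact enc_total u φ
    have hright : ∑ i ∈ Finset.range (n - d), extendS (enc u φ).2 (d + i) = 0 := by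
      rw [sum_range_split n d hdn.le, hleft, zero_add] at htot
      exact htot
    exact ⟨hnz, hleft, hright⟩
  · intro p hp
    simp only [Finset.mem_coe, mem_filter, mem_univ, true_and, Finset.mem_product] at hp ⊢
    obtain ⟨h1, h2, h3'⟩ := hp
    have htot : ∑ i, p.2 i = 0 := by
      rw [← sum_extendS, sum_range_split n d hdn.le, h2, h3', add_zero]
    constructor
    · intro v
      have hstep := dec_step u p htot v
      have hne : extendS p.2 ((v - u).val) ≠ 0 := by
        have hv : (v - u).val < n := ZMod.val_lt _
        simpa [extendS, dif_pos hv] using h1 ⟨(v - u).val, hv⟩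
      rw [← hstep] at hne
      intro heq
      rw [heq] at hne
      simp at hne
    · have hu : dec u p u = p.1 := by
        have := dec_apply u p 0 (Nat.pos_of_ne_zero (NeZero.ne n))
        simpa using this
      rw [hu, dec_apply u p d hdn, h2, add_zero]
  · intro φ _; exact dec_enc u φ
  · intro p hp
    simp only [Finset.mem_coe, mem_filter, mem_univ, true_and, Finset.mem_product] at hp
    obtain ⟨h1, h2, h3'⟩ := hp
    apply enc_dec
    rw [← sum_extendS, sum_range_split n d hdn.le, h2, h3', add_zero]

/-- under the uniform distribution on proper 3-colorings of the n-cycle,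
the probability that two vertices at (directed) distance d share a color equals
(2^d + 2(-1)^d)(2^{n-d} + 2(-1)^{n-d}) / (3(2^n + 2(-1)^n)). -/
theorem uniform_cycle_same_color_prob (n : ℕ) [NeZero n] (hn : 3 ≤ n)
    (d : ℕ) (hd1 : 1 ≤ d) (hd2 : d ≤ n - 1) (u : ZMod n) :
    ((Finset.univ.filter (fun φ : ZMod n → Fin 3 =>
        (∀ v : ZMod n, φ v ≠ φ (v + 1)) ∧ φ u = φ (u + (d : ZMod n)))).card : ℚ)
      / ((Finset.univ.filter (fun φ : ZMod n → Fin 3 =>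
        ∀ v : ZMod n, φ v ≠ φ (v + 1))).card : ℚ)
    = ((2 : ℚ) ^ d + 2 * (-1) ^ d) * ((2 : ℚ) ^ (n - d) + 2 * (-1) ^ (n - d))
      / (3 * ((2 : ℚ) ^ n + 2 * (-1) ^ n)) := by
  have hdn : d < n := by omega
  have e1 : (Finset.univ.filter (fun φ : ZMod n → Fin 3 =>
      ∀ v : ZMod n, φ v ≠ φ (v + 1))).card = 3 * stepCount n 0 := card_proper n u
  have e2 : (Finset.univ.filter (fun φ : ZMod n → Fin 3 =>
      (∀ v : ZMod n, φ v ≠ φ (v + 1)) ∧ φ u = φ (u + (d : ZMod n)))).card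
      = 3 * (stepCount d 0 * stepCount (n - d) 0) := card_proper_same n u d hdn
  rw [e1, e2]
  have hA : (3:ℚ) * (stepCount d 0 : ℚ) = 2^d + 2*(-1)^d := by
    exact_mod_cast (stepCount_closed d).1
  have hB : (3:ℚ) * (stepCount (n-d) 0 : ℚ) = 2^(n-d) + 2*(-1)^(n-d) := by
    exact_mod_cast (stepCount_closed (n-d)).1
  have hC : (3:ℚ) * (stepCount n 0 : ℚ) = 2^n + 2*(-1)^n := by
    exact_mod_cast (stepCount_closed n).1
  have h8 : (8:ℚ) ≤ 2^n := by
    calc (8:ℚ) = 2^3 := by norm_num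
    _ ≤ 2^n := by exact pow_le_pow_right₀ (by norm_num) hn
  have hpm : ((-1:ℚ))^n = 1 ∨ ((-1:ℚ))^n = -1 := by
    rcases Nat.even_or_odd n with h | h
    · left; exact h.neg_one_pow
    · right; exact h.neg_one_pow
  have hCpos : (0:ℚ) < 3 * (stepCount n 0 : ℚ) := by
    rw [hC]
    rcases hpm with h | h <;> rw [h] <;> linarith
  have hC0 : ((stepCount n 0 : ℚ)) ≠ 0 := by
    intro h; rw [h] at hCpos; norm_num at hCpos
  rw [← hA, ← hB, ← hC]
  push_cast
  field_simp
end

section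
/- The function f(d) = (2^d + 2(-1)^d)(2^{n-d} + 2(-1)^{n-d}) / (3(2^n + 2(-1)^n)), defined for d ∈ {1, 2, ..., ⌊n/2⌋}, is injective for every n ≥ 3. Consequently, in a uniformly random proper 3-coloring of the n-cycle, the probability that two vertices share a color determines their distance. -/
private lemma pow_two_ne_neg_one_pow (k : ℕ) (hk : 1 ≤ k) :
    (2 : ℚ) ^ k ≠ (-1) ^ k := by
  rcases Nat.even_or_odd k with h | h
  · rw [h.neg_one_pow]
    have : (2:ℚ)^1 ≤ 2^k := pow_le_pow_right₀ (by norm_num) hk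
    intro hc; rw [hc] at this; norm_num at this
  · rw [h.neg_one_pow]
    have : (0:ℚ) < 2^k := by positivity
    intro hc; rw [hc] at this; norm_num at this

private lemma key (n a b : ℕ) (hb' : b ≤ n / 2) (hab : a < b)
    (heq : ((2 : ℚ) ^ a + 2 * (-1) ^ a) * ((2 : ℚ) ^ (n - a) + 2 * (-1) ^ (n - a))
      = ((2 : ℚ) ^ b + 2 * (-1) ^ b) * ((2 : ℚ) ^ (n - b) + 2 * (-1) ^ (n - b))) :
    False := by
  set k := b - a with hk
  set m := n - a - b with hm
  have hk1 : 1 ≤ k := by omega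
  have hm1 : 1 ≤ m := by omega
  have e1 : b = a + k := by omega
  have e2 : n - a = a + k + m := by omega
  have e3 : n - b = a + m := by omega
  rw [e2, e3, e1] at heq
  simp only [pow_add] at heq
  have hP : (2:ℚ)^a ≠ 0 := by positivity
  have hx : ((-1:ℚ))^a ≠ 0 := by
    rcases Nat.even_or_odd a with h | h
    · rw [h.neg_one_pow]; norm_num
    · rw [h.neg_one_pow]; norm_num
  have h3 : ((2:ℚ)^k - (-1)^k) * ((2:ℚ)^m - (-1)^m) = 0 := by
    have h4 : (2:ℚ)^a * (-1)^a * (2 * (((2:ℚ)^k - (-1)^k) * ((2:ℚ)^m - (-1)^m))) = 0 := by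
      linear_combination heq
    have := mul_eq_zero.mp h4
    rcases this with h | h
    · exact absurd h (mul_ne_zero hP hx)
    · linarith
  rcases mul_eq_zero.mp h3 with h | h
  · exact pow_two_ne_neg_one_pow k hk1 (by linarith)
  · exact pow_two_ne_neg_one_pow m hm1 (by linarith)

/-- the probability f(d) that two vertices at distance d share a color in a
uniformly random proper 3-coloring of the n-cycle is injective on d ∈ {1, ..., ⌊n/2⌋}. -/
theorem same_color_prob_injective (n : ℕ) (hn : 3 ≤ n) (d₁ d₂ : ℕ)
    (h₁ : 1 ≤ d₁) (h₁' : d₁ ≤ n / 2) (h₂ : 1 ≤ d₂) (h₂' : d₂ ≤ n / 2)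
    (heq : ((2 : ℚ) ^ d₁ + 2 * (-1) ^ d₁) * ((2 : ℚ) ^ (n - d₁) + 2 * (-1) ^ (n - d₁))
        / (3 * ((2 : ℚ) ^ n + 2 * (-1) ^ n))
      = ((2 : ℚ) ^ d₂ + 2 * (-1) ^ d₂) * ((2 : ℚ) ^ (n - d₂) + 2 * (-1) ^ (n - d₂))
        / (3 * ((2 : ℚ) ^ n + 2 * (-1) ^ n))) :
    d₁ = d₂ := by
  have hD : (3 : ℚ) * ((2 : ℚ) ^ n + 2 * (-1) ^ n) ≠ 0 := by
    have h8 : (8:ℚ) ≤ 2^n := by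
      calc (8:ℚ) = 2^3 := by norm_num
      _ ≤ 2^n := pow_le_pow_right₀ (by norm_num) hn
    rcases Nat.even_or_odd n with h | h
    · rw [h.neg_one_pow]; nlinarith
    · rw [h.neg_one_pow]; nlinarith
  have heq' := mul_right_cancel₀ hD ((div_eq_div_iff hD hD).mp heq)
  rcases lt_trichotomy d₁ d₂ with h | h | h
  · exact absurd heq' (fun hc => key n d₁ d₂ h₂' h hc)
  · exact h
  · exact absurd heq'.symm (fun hc => key n d₂ d₁ h₁' h hc)
end

section
/- There is no probability distribution over proper 3-colorings of the 4-node cycle that is cyclic and independent beyond distance 1. More precisely: suppose Φ is a random proper 3-coloring of the cycle on vertices ℤ/4ℤ such that (i) Φ and Φ∘Prev have the same distribution (cyclicity, where Prev(v) = v-1), and (ii) for every vertex v, the colors Φ(v) and Φ(v+2) are independent random variables. Then a contradiction follows; no such Φ exists. -/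
open Finset

/-- there is no random proper 3-coloring of the 4-node cycle that is cyclic
and has Φ(v), Φ(v+2) independent for every v. -/
theorem no_perfect_independent_coloring_4cycle :
    ¬ ∃ p : (ZMod 4 → Fin 3) → ℝ,
      (∀ φ, 0 ≤ p φ) ∧
      (∑ φ : ZMod 4 → Fin 3, p φ = 1) ∧
      (∀ φ, p φ ≠ 0 → ∀ v : ZMod 4, φ v ≠ φ (v + 1)) ∧
      (∀ φ : ZMod 4 → Fin 3, p (fun v => φ (v - 1)) = p φ) ∧
      (∀ (v : ZMod 4) (σ τ : Fin 3),
        (∑ φ ∈ Finset.univ.filter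
            (fun φ : ZMod 4 → Fin 3 => φ v = σ ∧ φ (v + 2) = τ), p φ)
        = (∑ φ ∈ Finset.univ.filter (fun φ : ZMod 4 → Fin 3 => φ v = σ), p φ)
          * (∑ φ ∈ Finset.univ.filter (fun φ : ZMod 4 → Fin 3 => φ (v + 2) = τ), p φ)) := by
  rintro ⟨p, hpos, hsum, hproper, hcyc, hind⟩
  -- the shift equivalence
  let e : (ZMod 4 → Fin 3) ≃ (ZMod 4 → Fin 3) :=
    ⟨fun φ => fun w => φ (w - 1), fun φ => fun w => φ (w + 1),
      fun φ => funext fun w => congrArg φ (by ring),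
      fun φ => funext fun w => congrArg φ (by ring)⟩
  -- marginal at vertex v
  set S : ZMod 4 → Fin 3 → ℝ :=
    fun v σ => ∑ φ ∈ Finset.univ.filter (fun φ : ZMod 4 → Fin 3 => φ v = σ), p φ with hS
  have hshift : ∀ (v : ZMod 4) (σ : Fin 3), S v σ = S (v + 1) σ := by
    intro v σ
    show (∑ φ ∈ Finset.univ.filter (fun φ : ZMod 4 → Fin 3 => φ v = σ), p φ)
      = ∑ φ ∈ Finset.univ.filter (fun φ : ZMod 4 → Fin 3 => φ (v + 1) = σ), p φ
    rw [Finset.sum_filter, Finset.sum_filter,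
      ← Equiv.sum_comp e (fun ψ : ZMod 4 → Fin 3 => if ψ (v + 1) = σ then p ψ else 0)]
    refine Fintype.sum_congr _ _ fun φ => ?_
    show (if φ v = σ then p φ else 0)
      = if φ (v + 1 - 1) = σ then p (fun w => φ (w - 1)) else 0
    rw [hcyc φ, add_sub_cancel_right]
  have hmarg : ∀ (v : ZMod 4) (σ : Fin 3), S v σ = S 0 σ := by
    intro v σ
    have c0 : (0 : ZMod 4) + 1 = 1 := by decide
    have c1 : (1 : ZMod 4) + 1 = 2 := by decide
    have c2 : (2 : ZMod 4) + 1 = 3 := by decide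
    have e0 := hshift 0 σ; rw [c0] at e0
    have e1 := hshift 1 σ; rw [c1] at e1
    have e2 := hshift 2 σ; rw [c2] at e2
    fin_cases v
    · rfl
    · show S 1 σ = S 0 σ; rw [← e0]
    · show S 2 σ = S 0 σ; rw [← e1, ← e0]
    · show S 3 σ = S 0 σ; rw [← e2, ← e1, ← e0]
  set a : Fin 3 → ℝ := fun σ => S 0 σ with haDef
  have hanneg : ∀ σ, 0 ≤ a σ := fun σ => Finset.sum_nonneg fun φ _ => hpos φ
  -- total mass
  have hA : a 0 + a 1 + a 2 = 1 := by
    have h := Finset.sum_fiberwise (univ : Finset (ZMod 4 → Fin 3)) (fun φ => φ 0) p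
    rw [hsum, Fin.sum_univ_three] at h
    exact h
  -- joint distribution of opposite vertices
  have hjoint : ∀ (v : ZMod 4) (σ τ : Fin 3),
      (∑ φ ∈ Finset.univ.filter
        (fun φ : ZMod 4 → Fin 3 => φ v = σ ∧ φ (v + 2) = τ), p φ) = a σ * a τ := by
    intro v σ τ
    rw [hind v σ τ]
    exact congrArg₂ (· * ·) (hmarg v σ) (hmarg (v + 2) τ)
  have hkey : ∀ x y z w : Fin 3, x ≠ y → y ≠ z → z ≠ w → w ≠ x → x = z ∨ y = w := by decide
  -- Pr[φ0 = φ2] = ∑ aσ²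
  have h02 : (∑ φ ∈ Finset.univ.filter (fun φ : ZMod 4 → Fin 3 => φ 0 = φ 2), p φ)
      = a 0 * a 0 + a 1 * a 1 + a 2 * a 2 := by
    rw [← Finset.sum_fiberwise
      (Finset.univ.filter (fun φ : ZMod 4 → Fin 3 => φ 0 = φ 2)) (fun φ => φ 0) p]
    rw [Fin.sum_univ_three]
    have key : ∀ σ : Fin 3,
        (∑ φ ∈ (Finset.univ.filter (fun φ : ZMod 4 → Fin 3 => φ 0 = φ 2)).filter
          (fun φ => φ 0 = σ), p φ) = a σ * a σ := by
      intro σ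
      rw [Finset.filter_filter, ← hjoint 0 σ σ]
      apply Finset.sum_congr _ (fun _ _ => rfl)
      apply Finset.filter_congr
      intro φ _
      rw [show (0 : ZMod 4) + 2 = 2 by decide]
      constructor
      · rintro ⟨h1, h2⟩; exact ⟨h2, h1.symm.trans h2⟩
      · rintro ⟨h1, h2⟩; exact ⟨h1.trans h2.symm, h1⟩
    rw [key 0, key 1, key 2]
  -- Pr[φ1 = φ3] = ∑ aσ²
  have h13 : (∑ φ ∈ Finset.univ.filter (fun φ : ZMod 4 → Fin 3 => φ 1 = φ 3), p φ)
      = a 0 * a 0 + a 1 * a 1 + a 2 * a 2 := by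
    rw [← Finset.sum_fiberwise
      (Finset.univ.filter (fun φ : ZMod 4 → Fin 3 => φ 1 = φ 3)) (fun φ => φ 1) p]
    rw [Fin.sum_univ_three]
    have key : ∀ σ : Fin 3,
        (∑ φ ∈ (Finset.univ.filter (fun φ : ZMod 4 → Fin 3 => φ 1 = φ 3)).filter
          (fun φ => φ 1 = σ), p φ) = a σ * a σ := by
      intro σ
      rw [Finset.filter_filter, ← hjoint 1 σ σ]
      apply Finset.sum_congr _ (fun _ _ => rfl)
      apply Finset.filter_congr
      intro φ _
      rw [show (1 : ZMod 4) + 2 = 3 by decide]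
      constructor
      · rintro ⟨h1, h2⟩; exact ⟨h2, h1.symm.trans h2⟩
      · rintro ⟨h1, h2⟩; exact ⟨h1.trans h2.symm, h1⟩
    rw [key 0, key 1, key 2]
  -- every proper coloring has φ0 = φ2 or φ1 = φ3
  have hsplit : (1 : ℝ) ≤ (a 0 * a 0 + a 1 * a 1 + a 2 * a 2)
      + (a 0 * a 0 + a 1 * a 1 + a 2 * a 2) := by
    have hcov : ∑ φ : ZMod 4 → Fin 3, p φ
        = ∑ φ ∈ Finset.univ.filter (fun φ : ZMod 4 → Fin 3 => φ 0 = φ 2 ∨ φ 1 = φ 3), p φ := by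
      symm
      apply Finset.sum_subset (Finset.filter_subset _ _)
      intro φ _ hno
      simp only [Finset.mem_filter, Finset.mem_univ, true_and] at hno
      push_neg at hno
      by_contra hp
      have h01 := hproper φ hp 0
      have h12 := hproper φ hp 1
      have h23 := hproper φ hp 2
      have h30 := hproper φ hp 3
      rw [show (0 : ZMod 4) + 1 = 1 by decide] at h01
      rw [show (1 : ZMod 4) + 1 = 2 by decide] at h12
      rw [show (2 : ZMod 4) + 1 = 3 by decide] at h23
      rw [show (3 : ZMod 4) + 1 = 0 by decide] at h30
      rcases hkey (φ 0) (φ 1) (φ 2) (φ 3) h01 h12 h23 h30 with h | h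
      · exact hno.1 h
      · exact hno.2 h
    have hui := Finset.sum_union_inter
      (s₁ := Finset.univ.filter (fun φ : ZMod 4 → Fin 3 => φ 0 = φ 2))
      (s₂ := Finset.univ.filter (fun φ : ZMod 4 → Fin 3 => φ 1 = φ 3)) (f := p)
    have hinter : (0 : ℝ) ≤ ∑ φ ∈
        (Finset.univ.filter (fun φ : ZMod 4 → Fin 3 => φ 0 = φ 2) ∩
         Finset.univ.filter (fun φ : ZMod 4 → Fin 3 => φ 1 = φ 3)), p φ :=
      Finset.sum_nonneg fun φ _ => hpos φ
    rw [Finset.filter_or] at hcov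
    rw [hsum] at hcov
    linarith [h02, h13]
  -- a ρ ≤ (1 - a ρ)²
  have hB : ∀ ρ : Fin 3, a ρ ≤ ∑ st : Fin 3 × Fin 3,
      (if st.1 ≠ ρ ∧ st.2 ≠ ρ then a st.1 * a st.2 else 0) := by
    intro ρ
    have hstep : a ρ = ∑ st : Fin 3 × Fin 3,
        ∑ φ ∈ (Finset.univ.filter (fun φ : ZMod 4 → Fin 3 => φ 1 = ρ)).filter
          (fun φ => (φ 0, φ 2) = st), p φ := by
      rw [Finset.sum_fiberwise]
      exact (hmarg 1 ρ).symm
    rw [hstep]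
    apply Finset.sum_le_sum
    intro st _
    by_cases h1 : st.1 = ρ
    · rw [if_neg (by simp [h1])]
      apply le_of_eq
      apply Finset.sum_eq_zero
      intro φ hφ
      simp only [Finset.mem_filter, Finset.mem_univ, true_and, Prod.ext_iff] at hφ
      by_contra hp
      have h01 := hproper φ hp 0
      rw [show (0 : ZMod 4) + 1 = 1 by decide] at h01
      exact h01 (hφ.2.1.trans (h1.trans hφ.1.symm))
    by_cases h2 : st.2 = ρ
    · rw [if_neg (by simp [h2])]
      apply le_of_eq
      apply Finset.sum_eq_zero
      intro φ hφ
      simp only [Finset.mem_filter, Finset.mem_univ, true_and, Prod.ext_iff] at hφ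
      by_contra hp
      have h12 := hproper φ hp 1
      rw [show (1 : ZMod 4) + 1 = 2 by decide] at h12
      exact h12 ((hφ.1.trans h2.symm).trans hφ.2.2.symm)
    · rw [if_pos ⟨h1, h2⟩, ← hjoint 0 st.1 st.2]
      apply Finset.sum_le_sum_of_subset_of_nonneg
      · intro φ hφ
        simp only [Finset.mem_filter, Finset.mem_univ, true_and, Prod.ext_iff] at hφ ⊢
        rw [show (0 : ZMod 4) + 2 = 2 by decide]
        exact ⟨hφ.2.1, hφ.2.2⟩
      · intro φ _ _; exact hpos φ
  have hB0 := hB 0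
  have hB1 := hB 1
  have hB2 := hB 2
  simp only [Fintype.sum_prod_type, Fin.sum_univ_three, ne_eq] at hB0 hB1 hB2
  norm_num [Fin.ext_iff] at hB0 hB1 hB2
  -- each a ρ ≤ 2/5
  have hle : ∀ ρ : Fin 3, a ρ ≤ (1 - a ρ) ^ 2 → a ρ ≤ 2 / 5 := by
    intro ρ hq
    have h1 : a ρ ≤ 1 := by
      have hs := Finset.single_le_sum (f := a) (fun σ _ => hanneg σ) (Finset.mem_univ ρ)
      rw [Fin.sum_univ_three] at hs
      linarith
    nlinarith
  have k0 : a 0 ≤ 2 / 5 := by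
    apply hle
    calc a 0 ≤ a 1 * a 1 + a 1 * a 2 + (a 2 * a 1 + a 2 * a 2) := by linarith [hB0]
      _ = (a 1 + a 2) ^ 2 := by ring
      _ = (1 - a 0) ^ 2 := by rw [show a 1 + a 2 = 1 - a 0 by linarith]
  have k1 : a 1 ≤ 2 / 5 := by
    apply hle
    calc a 1 ≤ a 0 * a 0 + a 0 * a 2 + (a 2 * a 0 + a 2 * a 2) := by linarith [hB1]
      _ = (a 0 + a 2) ^ 2 := by ring
      _ = (1 - a 1) ^ 2 := by rw [show a 0 + a 2 = 1 - a 1 by linarith]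
  have k2 : a 2 ≤ 2 / 5 := by
    apply hle
    calc a 2 ≤ a 0 * a 0 + a 0 * a 1 + (a 1 * a 0 + a 1 * a 1) := by linarith [hB2]
      _ = (a 0 + a 1) ^ 2 := by ring
      _ = (1 - a 2) ^ 2 := by rw [show a 0 + a 1 = 1 - a 2 by linarith]
  have q0 : a 0 * a 0 ≤ 2 / 5 * a 0 := mul_le_mul_of_nonneg_right k0 (hanneg 0)
  have q1 : a 1 * a 1 ≤ 2 / 5 * a 1 := mul_le_mul_of_nonneg_right k1 (hanneg 1)
  have q2 : a 2 * a 2 ≤ 2 / 5 * a 2 := mul_le_mul_of_nonneg_right k2 (hanneg 2)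
  linarith
end

section
/- Under the hypotheses of the 4-node ring impossibility argument, if Φ is a cyclic random proper 3-coloring of the 4-cycle with Φ(v) and Φ(v+2) independent, and r_σ = Pr[Φ(v) = σ] for each color σ, then for each color σ one has r_σ ≤ 1 - 1/√2. (This yields the contradiction r_0 + r_1 + r_2 ≤ 3(1 - 1/√2) < 1.) -/
set_option maxRecDepth 8000
set_option maxHeartbeats 2000000

private def e4aux : (Fin 3 × Fin 3 × Fin 3 × Fin 3) ≃ (ZMod 4 → Fin 3) where
  toFun x := ![x.1, x.2.1, x.2.2.1, x.2.2.2]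
  invFun f := (f 0, f 1, f 2, f 3)
  left_inv := by intro x; rfl
  right_inv := by intro f; funext w; fin_cases w <;> rfl

private lemma expand_sum_aux (g : (ZMod 4 → Fin 3) → ℝ) :
    ∑ φ : ZMod 4 → Fin 3, g φ
      = ∑ a : Fin 3, ∑ b : Fin 3, ∑ c : Fin 3, ∑ d : Fin 3, g ![a,b,c,d] := by
  rw [← Equiv.sum_comp e4aux g]
  simp [Fintype.sum_prod_type, e4aux]
  rfl

private lemma vec4_0 (a b c d : Fin 3) : Matrix.vecCons a ![b,c,d] (0 : ZMod 4) = a := rfl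
private lemma vec4_1 (a b c d : Fin 3) : Matrix.vecCons a ![b,c,d] (1 : ZMod 4) = b := rfl
private lemma vec4_2 (a b c d : Fin 3) : Matrix.vecCons a ![b,c,d] (2 : ZMod 4) = c := rfl
private lemma vec4_3 (a b c d : Fin 3) : Matrix.vecCons a ![b,c,d] (3 : ZMod 4) = d := rfl

private lemma shift_inv_aux (p : (ZMod 4 → Fin 3) → ℝ)
    (hcyc : ∀ φ : ZMod 4 → Fin 3, p (fun v => φ (v - 1)) = p φ)
    (v : ZMod 4) (σ : Fin 3) :
    (∑ φ ∈ Finset.univ.filter (fun φ : ZMod 4 → Fin 3 => φ (v + 1) = σ), p φ)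
      = ∑ φ ∈ Finset.univ.filter (fun φ : ZMod 4 → Fin 3 => φ v = σ), p φ := by
  apply Finset.sum_nbij' (i := fun φ => fun w => φ (w + 1)) (j := fun φ => fun w => φ (w - 1))
  · intro φ hφ
    simp only [Finset.mem_filter, Finset.mem_univ, true_and] at *
    simpa using hφ
  · intro φ hφ
    simp only [Finset.mem_filter, Finset.mem_univ, true_and] at *
    simpa using hφ
  · intro φ _; funext w; simp
  · intro φ _; funext w; simp
  · intro φ _
    rw [← hcyc (fun w => φ (w + 1))]
    congr 1; funext w; simp

private lemma final_ineq_aux (x y z : ℝ) (hx : 0 ≤ x) (hy : 0 ≤ y)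
    (hs : x + y + z = 1) (hk : 0 ≤ (x + y - z)/2 - x*z - y*z) :
    z ≤ 1 - 1 / Real.sqrt 2 := by
  have hs2 : (0:ℝ) < Real.sqrt 2 := by positivity
  have hsq : Real.sqrt 2 ^ 2 = 2 := Real.sq_sqrt (by norm_num)
  have hz1 : z ≤ 1 := by linarith
  have hxy : x + y = 1 - z := by linarith
  have hprod : x*z + y*z = (1-z)*z := by rw [← hxy]; ring
  have hquad : 0 ≤ 2*z^2 - 4*z + 1 := by nlinarith [hk, hprod]
  have ht0 : 0 ≤ Real.sqrt 2 * (1-z) := mul_nonneg hs2.le (by linarith)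
  have ht2 : (Real.sqrt 2*(1-z))^2 = 2*(1-z)^2 := by rw [mul_pow, hsq]
  have hkey : 1 ≤ Real.sqrt 2 * (1 - z) := by nlinarith [ht0, ht2, hquad]
  have h3 : 1/Real.sqrt 2 ≤ 1 - z := by
    rw [div_le_iff₀ hs2]
    nlinarith [hkey]
  linarith

/-- for any cyclic random proper 3-coloring of the 4-cycle with Φ(v) and
Φ(v+2) independent, each single-node color probability r_σ is at most 1 - 1/√2. -/
theorem marginal_bound_4cycle (p : (ZMod 4 → Fin 3) → ℝ)
    (hnonneg : ∀ φ, 0 ≤ p φ)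
    (hsum : ∑ φ : ZMod 4 → Fin 3, p φ = 1)
    (hproper : ∀ φ, p φ ≠ 0 → ∀ v : ZMod 4, φ v ≠ φ (v + 1))
    (hcyc : ∀ φ : ZMod 4 → Fin 3, p (fun v => φ (v - 1)) = p φ)
    (hind : ∀ (v : ZMod 4) (σ τ : Fin 3),
        (∑ φ ∈ Finset.univ.filter
            (fun φ : ZMod 4 → Fin 3 => φ v = σ ∧ φ (v + 2) = τ), p φ)
        = (∑ φ ∈ Finset.univ.filter (fun φ : ZMod 4 → Fin 3 => φ v = σ), p φ)
          * (∑ φ ∈ Finset.univ.filter (fun φ : ZMod 4 → Fin 3 => φ (v + 2) = τ), p φ)) :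
    ∀ (v : ZMod 4) (σ : Fin 3),
      (∑ φ ∈ Finset.univ.filter (fun φ : ZMod 4 → Fin 3 => φ v = σ), p φ)
        ≤ 1 - 1 / Real.sqrt 2 := by
  have hz : ∀ φ : ZMod 4 → Fin 3, ¬(∀ v : ZMod 4, φ v ≠ φ (v+1)) → p φ = 0 := by
    intro φ h
    by_contra hp
    exact h (hproper _ hp)
  have hz0000 : p ![0,0,0,0] = 0 := hz ![0,0,0,0] (by intro h; have h0 := h 0; have h1 := h 1; have h2 := h 2; have h3 := h 3; revert h0 h1 h2 h3; decide)
  have hz0001 : p ![0,0,0,1] = 0 := hz ![0,0,0,1] (by intro h; have h0 := h 0; have h1 := h 1; have h2 := h 2; have h3 := h 3; revert h0 h1 h2 h3; decide)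
  have hz0002 : p ![0,0,0,2] = 0 := hz ![0,0,0,2] (by intro h; have h0 := h 0; have h1 := h 1; have h2 := h 2; have h3 := h 3; revert h0 h1 h2 h3; decide)
  have hz0010 : p ![0,0,1,0] = 0 := hz ![0,0,1,0] (by intro h; have h0 := h 0; have h1 := h 1; have h2 := h 2; have h3 := h 3; revert h0 h1 h2 h3; decide)
  have hz0011 : p ![0,0,1,1] = 0 := hz ![0,0,1,1] (by intro h; have h0 := h 0; have h1 := h 1; have h2 := h 2; have h3 := h 3; revert h0 h1 h2 h3; decide)
  have hz0012 : p ![0,0,1,2] = 0 := hz ![0,0,1,2] (by intro h; have h0 := h 0; have h1 := h 1; have h2 := h 2; have h3 := h 3; revert h0 h1 h2 h3; decide)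
  have hz0020 : p ![0,0,2,0] = 0 := hz ![0,0,2,0] (by intro h; have h0 := h 0; have h1 := h 1; have h2 := h 2; have h3 := h 3; revert h0 h1 h2 h3; decide)
  have hz0021 : p ![0,0,2,1] = 0 := hz ![0,0,2,1] (by intro h; have h0 := h 0; have h1 := h 1; have h2 := h 2; have h3 := h 3; revert h0 h1 h2 h3; decide)
  have hz0022 : p ![0,0,2,2] = 0 := hz ![0,0,2,2] (by intro h; have h0 := h 0; have h1 := h 1; have h2 := h 2; have h3 := h 3; revert h0 h1 h2 h3; decide)
  have hz0100 : p ![0,1,0,0] = 0 := hz ![0,1,0,0] (by intro h; have h0 := h 0; have h1 := h 1; have h2 := h 2; have h3 := h 3; revert h0 h1 h2 h3; decide)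
  have hz0110 : p ![0,1,1,0] = 0 := hz ![0,1,1,0] (by intro h; have h0 := h 0; have h1 := h 1; have h2 := h 2; have h3 := h 3; revert h0 h1 h2 h3; decide)
  have hz0111 : p ![0,1,1,1] = 0 := hz ![0,1,1,1] (by intro h; have h0 := h 0; have h1 := h 1; have h2 := h 2; have h3 := h 3; revert h0 h1 h2 h3; decide)
  have hz0112 : p ![0,1,1,2] = 0 := hz ![0,1,1,2] (by intro h; have h0 := h 0; have h1 := h 1; have h2 := h 2; have h3 := h 3; revert h0 h1 h2 h3; decide)
  have hz0120 : p ![0,1,2,0] = 0 := hz ![0,1,2,0] (by intro h; have h0 := h 0; have h1 := h 1; have h2 := h 2; have h3 := h 3; revert h0 h1 h2 h3; decide)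
  have hz0122 : p ![0,1,2,2] = 0 := hz ![0,1,2,2] (by intro h; have h0 := h 0; have h1 := h 1; have h2 := h 2; have h3 := h 3; revert h0 h1 h2 h3; decide)
  have hz0200 : p ![0,2,0,0] = 0 := hz ![0,2,0,0] (by intro h; have h0 := h 0; have h1 := h 1; have h2 := h 2; have h3 := h 3; revert h0 h1 h2 h3; decide)
  have hz0210 : p ![0,2,1,0] = 0 := hz ![0,2,1,0] (by intro h; have h0 := h 0; have h1 := h 1; have h2 := h 2; have h3 := h 3; revert h0 h1 h2 h3; decide)
  have hz0211 : p ![0,2,1,1] = 0 := hz ![0,2,1,1] (by intro h; have h0 := h 0; have h1 := h 1; have h2 := h 2; have h3 := h 3; revert h0 h1 h2 h3; decide)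
  have hz0220 : p ![0,2,2,0] = 0 := hz ![0,2,2,0] (by intro h; have h0 := h 0; have h1 := h 1; have h2 := h 2; have h3 := h 3; revert h0 h1 h2 h3; decide)
  have hz0221 : p ![0,2,2,1] = 0 := hz ![0,2,2,1] (by intro h; have h0 := h 0; have h1 := h 1; have h2 := h 2; have h3 := h 3; revert h0 h1 h2 h3; decide)
  have hz0222 : p ![0,2,2,2] = 0 := hz ![0,2,2,2] (by intro h; have h0 := h 0; have h1 := h 1; have h2 := h 2; have h3 := h 3; revert h0 h1 h2 h3; decide)
  have hz1000 : p ![1,0,0,0] = 0 := hz ![1,0,0,0] (by intro h; have h0 := h 0; have h1 := h 1; have h2 := h 2; have h3 := h 3; revert h0 h1 h2 h3; decide)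
  have hz1001 : p ![1,0,0,1] = 0 := hz ![1,0,0,1] (by intro h; have h0 := h 0; have h1 := h 1; have h2 := h 2; have h3 := h 3; revert h0 h1 h2 h3; decide)
  have hz1002 : p ![1,0,0,2] = 0 := hz ![1,0,0,2] (by intro h; have h0 := h 0; have h1 := h 1; have h2 := h 2; have h3 := h 3; revert h0 h1 h2 h3; decide)
  have hz1011 : p ![1,0,1,1] = 0 := hz ![1,0,1,1] (by intro h; have h0 := h 0; have h1 := h 1; have h2 := h 2; have h3 := h 3; revert h0 h1 h2 h3; decide)
  have hz1021 : p ![1,0,2,1] = 0 := hz ![1,0,2,1] (by intro h; have h0 := h 0; have h1 := h 1; have h2 := h 2; have h3 := h 3; revert h0 h1 h2 h3; decide)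
  have hz1022 : p ![1,0,2,2] = 0 := hz ![1,0,2,2] (by intro h; have h0 := h 0; have h1 := h 1; have h2 := h 2; have h3 := h 3; revert h0 h1 h2 h3; decide)
  have hz1100 : p ![1,1,0,0] = 0 := hz ![1,1,0,0] (by intro h; have h0 := h 0; have h1 := h 1; have h2 := h 2; have h3 := h 3; revert h0 h1 h2 h3; decide)
  have hz1101 : p ![1,1,0,1] = 0 := hz ![1,1,0,1] (by intro h; have h0 := h 0; have h1 := h 1; have h2 := h 2; have h3 := h 3; revert h0 h1 h2 h3; decide)
  have hz1102 : p ![1,1,0,2] = 0 := hz ![1,1,0,2] (by intro h; have h0 := h 0; have h1 := h 1; have h2 := h 2; have h3 := h 3; revert h0 h1 h2 h3; decide)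
  have hz1110 : p ![1,1,1,0] = 0 := hz ![1,1,1,0] (by intro h; have h0 := h 0; have h1 := h 1; have h2 := h 2; have h3 := h 3; revert h0 h1 h2 h3; decide)
  have hz1111 : p ![1,1,1,1] = 0 := hz ![1,1,1,1] (by intro h; have h0 := h 0; have h1 := h 1; have h2 := h 2; have h3 := h 3; revert h0 h1 h2 h3; decide)
  have hz1112 : p ![1,1,1,2] = 0 := hz ![1,1,1,2] (by intro h; have h0 := h 0; have h1 := h 1; have h2 := h 2; have h3 := h 3; revert h0 h1 h2 h3; decide)
  have hz1120 : p ![1,1,2,0] = 0 := hz ![1,1,2,0] (by intro h; have h0 := h 0; have h1 := h 1; have h2 := h 2; have h3 := h 3; revert h0 h1 h2 h3; decide)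
  have hz1121 : p ![1,1,2,1] = 0 := hz ![1,1,2,1] (by intro h; have h0 := h 0; have h1 := h 1; have h2 := h 2; have h3 := h 3; revert h0 h1 h2 h3; decide)
  have hz1122 : p ![1,1,2,2] = 0 := hz ![1,1,2,2] (by intro h; have h0 := h 0; have h1 := h 1; have h2 := h 2; have h3 := h 3; revert h0 h1 h2 h3; decide)
  have hz1200 : p ![1,2,0,0] = 0 := hz ![1,2,0,0] (by intro h; have h0 := h 0; have h1 := h 1; have h2 := h 2; have h3 := h 3; revert h0 h1 h2 h3; decide)
  have hz1201 : p ![1,2,0,1] = 0 := hz ![1,2,0,1] (by intro h; have h0 := h 0; have h1 := h 1; have h2 := h 2; have h3 := h 3; revert h0 h1 h2 h3; decide)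
  have hz1211 : p ![1,2,1,1] = 0 := hz ![1,2,1,1] (by intro h; have h0 := h 0; have h1 := h 1; have h2 := h 2; have h3 := h 3; revert h0 h1 h2 h3; decide)
  have hz1220 : p ![1,2,2,0] = 0 := hz ![1,2,2,0] (by intro h; have h0 := h 0; have h1 := h 1; have h2 := h 2; have h3 := h 3; revert h0 h1 h2 h3; decide)
  have hz1221 : p ![1,2,2,1] = 0 := hz ![1,2,2,1] (by intro h; have h0 := h 0; have h1 := h 1; have h2 := h 2; have h3 := h 3; revert h0 h1 h2 h3; decide)
  have hz1222 : p ![1,2,2,2] = 0 := hz ![1,2,2,2] (by intro h; have h0 := h 0; have h1 := h 1; have h2 := h 2; have h3 := h 3; revert h0 h1 h2 h3; decide)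
  have hz2000 : p ![2,0,0,0] = 0 := hz ![2,0,0,0] (by intro h; have h0 := h 0; have h1 := h 1; have h2 := h 2; have h3 := h 3; revert h0 h1 h2 h3; decide)
  have hz2001 : p ![2,0,0,1] = 0 := hz ![2,0,0,1] (by intro h; have h0 := h 0; have h1 := h 1; have h2 := h 2; have h3 := h 3; revert h0 h1 h2 h3; decide)
  have hz2002 : p ![2,0,0,2] = 0 := hz ![2,0,0,2] (by intro h; have h0 := h 0; have h1 := h 1; have h2 := h 2; have h3 := h 3; revert h0 h1 h2 h3; decide)
  have hz2011 : p ![2,0,1,1] = 0 := hz ![2,0,1,1] (by intro h; have h0 := h 0; have h1 := h 1; have h2 := h 2; have h3 := h 3; revert h0 h1 h2 h3; decide)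
  have hz2012 : p ![2,0,1,2] = 0 := hz ![2,0,1,2] (by intro h; have h0 := h 0; have h1 := h 1; have h2 := h 2; have h3 := h 3; revert h0 h1 h2 h3; decide)
  have hz2022 : p ![2,0,2,2] = 0 := hz ![2,0,2,2] (by intro h; have h0 := h 0; have h1 := h 1; have h2 := h 2; have h3 := h 3; revert h0 h1 h2 h3; decide)
  have hz2100 : p ![2,1,0,0] = 0 := hz ![2,1,0,0] (by intro h; have h0 := h 0; have h1 := h 1; have h2 := h 2; have h3 := h 3; revert h0 h1 h2 h3; decide)
  have hz2102 : p ![2,1,0,2] = 0 := hz ![2,1,0,2] (by intro h; have h0 := h 0; have h1 := h 1; have h2 := h 2; have h3 := h 3; revert h0 h1 h2 h3; decide)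
  have hz2110 : p ![2,1,1,0] = 0 := hz ![2,1,1,0] (by intro h; have h0 := h 0; have h1 := h 1; have h2 := h 2; have h3 := h 3; revert h0 h1 h2 h3; decide)
  have hz2111 : p ![2,1,1,1] = 0 := hz ![2,1,1,1] (by intro h; have h0 := h 0; have h1 := h 1; have h2 := h 2; have h3 := h 3; revert h0 h1 h2 h3; decide)
  have hz2112 : p ![2,1,1,2] = 0 := hz ![2,1,1,2] (by intro h; have h0 := h 0; have h1 := h 1; have h2 := h 2; have h3 := h 3; revert h0 h1 h2 h3; decide)
  have hz2122 : p ![2,1,2,2] = 0 := hz ![2,1,2,2] (by intro h; have h0 := h 0; have h1 := h 1; have h2 := h 2; have h3 := h 3; revert h0 h1 h2 h3; decide)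
  have hz2200 : p ![2,2,0,0] = 0 := hz ![2,2,0,0] (by intro h; have h0 := h 0; have h1 := h 1; have h2 := h 2; have h3 := h 3; revert h0 h1 h2 h3; decide)
  have hz2201 : p ![2,2,0,1] = 0 := hz ![2,2,0,1] (by intro h; have h0 := h 0; have h1 := h 1; have h2 := h 2; have h3 := h 3; revert h0 h1 h2 h3; decide)
  have hz2202 : p ![2,2,0,2] = 0 := hz ![2,2,0,2] (by intro h; have h0 := h 0; have h1 := h 1; have h2 := h 2; have h3 := h 3; revert h0 h1 h2 h3; decide)
  have hz2210 : p ![2,2,1,0] = 0 := hz ![2,2,1,0] (by intro h; have h0 := h 0; have h1 := h 1; have h2 := h 2; have h3 := h 3; revert h0 h1 h2 h3; decide)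
  have hz2211 : p ![2,2,1,1] = 0 := hz ![2,2,1,1] (by intro h; have h0 := h 0; have h1 := h 1; have h2 := h 2; have h3 := h 3; revert h0 h1 h2 h3; decide)
  have hz2212 : p ![2,2,1,2] = 0 := hz ![2,2,1,2] (by intro h; have h0 := h 0; have h1 := h 1; have h2 := h 2; have h3 := h 3; revert h0 h1 h2 h3; decide)
  have hz2220 : p ![2,2,2,0] = 0 := hz ![2,2,2,0] (by intro h; have h0 := h 0; have h1 := h 1; have h2 := h 2; have h3 := h 3; revert h0 h1 h2 h3; decide)
  have hz2221 : p ![2,2,2,1] = 0 := hz ![2,2,2,1] (by intro h; have h0 := h 0; have h1 := h 1; have h2 := h 2; have h3 := h 3; revert h0 h1 h2 h3; decide)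
  have hz2222 : p ![2,2,2,2] = 0 := hz ![2,2,2,2] (by intro h; have h0 := h 0; have h1 := h 1; have h2 := h 2; have h3 := h 3; revert h0 h1 h2 h3; decide)
  have hc0101 : p ![1,0,1,0] = p ![0,1,0,1] := by
    have e : (fun v => (![0,1,0,1] : ZMod 4 → Fin 3) (v-1)) = (![1,0,1,0] : ZMod 4 → Fin 3) := by decide
    exact (congrArg p e.symm).trans (hcyc ![0,1,0,1])
  have hc0102 : p ![2,0,1,0] = p ![0,1,0,2] := by
    have e : (fun v => (![0,1,0,2] : ZMod 4 → Fin 3) (v-1)) = (![2,0,1,0] : ZMod 4 → Fin 3) := by decide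
    exact (congrArg p e.symm).trans (hcyc ![0,1,0,2])
  have hc0121 : p ![1,0,1,2] = p ![0,1,2,1] := by
    have e : (fun v => (![0,1,2,1] : ZMod 4 → Fin 3) (v-1)) = (![1,0,1,2] : ZMod 4 → Fin 3) := by decide
    exact (congrArg p e.symm).trans (hcyc ![0,1,2,1])
  have hc0201 : p ![1,0,2,0] = p ![0,2,0,1] := by
    have e : (fun v => (![0,2,0,1] : ZMod 4 → Fin 3) (v-1)) = (![1,0,2,0] : ZMod 4 → Fin 3) := by decide
    exact (congrArg p e.symm).trans (hcyc ![0,2,0,1])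
  have hc0202 : p ![2,0,2,0] = p ![0,2,0,2] := by
    have e : (fun v => (![0,2,0,2] : ZMod 4 → Fin 3) (v-1)) = (![2,0,2,0] : ZMod 4 → Fin 3) := by decide
    exact (congrArg p e.symm).trans (hcyc ![0,2,0,2])
  have hc0212 : p ![2,0,2,1] = p ![0,2,1,2] := by
    have e : (fun v => (![0,2,1,2] : ZMod 4 → Fin 3) (v-1)) = (![2,0,2,1] : ZMod 4 → Fin 3) := by decide
    exact (congrArg p e.symm).trans (hcyc ![0,2,1,2])
  have hc1010 : p ![0,1,0,1] = p ![1,0,1,0] := by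
    have e : (fun v => (![1,0,1,0] : ZMod 4 → Fin 3) (v-1)) = (![0,1,0,1] : ZMod 4 → Fin 3) := by decide
    exact (congrArg p e.symm).trans (hcyc ![1,0,1,0])
  have hc1012 : p ![2,1,0,1] = p ![1,0,1,2] := by
    have e : (fun v => (![1,0,1,2] : ZMod 4 → Fin 3) (v-1)) = (![2,1,0,1] : ZMod 4 → Fin 3) := by decide
    exact (congrArg p e.symm).trans (hcyc ![1,0,1,2])
  have hc1020 : p ![0,1,0,2] = p ![1,0,2,0] := by
    have e : (fun v => (![1,0,2,0] : ZMod 4 → Fin 3) (v-1)) = (![0,1,0,2] : ZMod 4 → Fin 3) := by decide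
    exact (congrArg p e.symm).trans (hcyc ![1,0,2,0])
  have hc1202 : p ![2,1,2,0] = p ![1,2,0,2] := by
    have e : (fun v => (![1,2,0,2] : ZMod 4 → Fin 3) (v-1)) = (![2,1,2,0] : ZMod 4 → Fin 3) := by decide
    exact (congrArg p e.symm).trans (hcyc ![1,2,0,2])
  have hc1210 : p ![0,1,2,1] = p ![1,2,1,0] := by
    have e : (fun v => (![1,2,1,0] : ZMod 4 → Fin 3) (v-1)) = (![0,1,2,1] : ZMod 4 → Fin 3) := by decide
    exact (congrArg p e.symm).trans (hcyc ![1,2,1,0])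
  have hc1212 : p ![2,1,2,1] = p ![1,2,1,2] := by
    have e : (fun v => (![1,2,1,2] : ZMod 4 → Fin 3) (v-1)) = (![2,1,2,1] : ZMod 4 → Fin 3) := by decide
    exact (congrArg p e.symm).trans (hcyc ![1,2,1,2])
  have hc2010 : p ![0,2,0,1] = p ![2,0,1,0] := by
    have e : (fun v => (![2,0,1,0] : ZMod 4 → Fin 3) (v-1)) = (![0,2,0,1] : ZMod 4 → Fin 3) := by decide
    exact (congrArg p e.symm).trans (hcyc ![2,0,1,0])
  have hc2020 : p ![0,2,0,2] = p ![2,0,2,0] := by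
    have e : (fun v => (![2,0,2,0] : ZMod 4 → Fin 3) (v-1)) = (![0,2,0,2] : ZMod 4 → Fin 3) := by decide
    exact (congrArg p e.symm).trans (hcyc ![2,0,2,0])
  have hc2021 : p ![1,2,0,2] = p ![2,0,2,1] := by
    have e : (fun v => (![2,0,2,1] : ZMod 4 → Fin 3) (v-1)) = (![1,2,0,2] : ZMod 4 → Fin 3) := by decide
    exact (congrArg p e.symm).trans (hcyc ![2,0,2,1])
  have hc2101 : p ![1,2,1,0] = p ![2,1,0,1] := by
    have e : (fun v => (![2,1,0,1] : ZMod 4 → Fin 3) (v-1)) = (![1,2,1,0] : ZMod 4 → Fin 3) := by decide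
    exact (congrArg p e.symm).trans (hcyc ![2,1,0,1])
  have hc2120 : p ![0,2,1,2] = p ![2,1,2,0] := by
    have e : (fun v => (![2,1,2,0] : ZMod 4 → Fin 3) (v-1)) = (![0,2,1,2] : ZMod 4 → Fin 3) := by decide
    exact (congrArg p e.symm).trans (hcyc ![2,1,2,0])
  have hc2121 : p ![1,2,1,2] = p ![2,1,2,1] := by
    have e : (fun v => (![2,1,2,1] : ZMod 4 → Fin 3) (v-1)) = (![1,2,1,2] : ZMod 4 → Fin 3) := by decide
    exact (congrArg p e.symm).trans (hcyc ![2,1,2,1])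
  have hsh := shift_inv_aux p hcyc
  have h01 : ∀ τ : Fin 3, (∑ φ ∈ Finset.univ.filter (fun φ : ZMod 4 → Fin 3 => φ 1 = τ), p φ) = ∑ φ ∈ Finset.univ.filter (fun φ : ZMod 4 → Fin 3 => φ 0 = τ), p φ := by
    intro τ; have h := hsh 0 τ
    rw [show ((0:ZMod 4)+1) = 1 from by decide] at h; exact h
  have h12 : ∀ τ : Fin 3, (∑ φ ∈ Finset.univ.filter (fun φ : ZMod 4 → Fin 3 => φ 2 = τ), p φ) = ∑ φ ∈ Finset.univ.filter (fun φ : ZMod 4 → Fin 3 => φ 1 = τ), p φ := by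
    intro τ; have h := hsh 1 τ
    rw [show ((1:ZMod 4)+1) = 2 from by decide] at h; exact h
  have h23 : ∀ τ : Fin 3, (∑ φ ∈ Finset.univ.filter (fun φ : ZMod 4 → Fin 3 => φ 3 = τ), p φ) = ∑ φ ∈ Finset.univ.filter (fun φ : ZMod 4 → Fin 3 => φ 2 = τ), p φ := by
    intro τ; have h := hsh 2 τ
    rw [show ((2:ZMod 4)+1) = 3 from by decide] at h; exact h
  have h02 : ∀ τ : Fin 3, (∑ φ ∈ Finset.univ.filter (fun φ : ZMod 4 → Fin 3 => φ 2 = τ), p φ) = ∑ φ ∈ Finset.univ.filter (fun φ : ZMod 4 → Fin 3 => φ 0 = τ), p φ := fun τ => (h12 τ).trans (h01 τ)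
  have hr0 : (∑ φ ∈ Finset.univ.filter (fun φ : ZMod 4 → Fin 3 => φ 0 = (0:Fin 3)), p φ) = p ![0,1,0,1] + p ![0,1,0,2] + p ![0,1,2,1] + p ![0,2,0,1] + p ![0,2,0,2] + p ![0,2,1,2] := by
    rw [Finset.sum_filter, expand_sum_aux]
    simp only [Fin.sum_univ_three, vec4_0, vec4_1, vec4_2, vec4_3]
    simp
    linarith [hz0000, hz0001, hz0002, hz0010, hz0011, hz0012, hz0020, hz0021, hz0022, hz0100, hz0110, hz0111, hz0112, hz0120, hz0122, hz0200, hz0210, hz0211, hz0220, hz0221, hz0222]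
  have hr1 : (∑ φ ∈ Finset.univ.filter (fun φ : ZMod 4 → Fin 3 => φ 0 = (1:Fin 3)), p φ) = p ![1,0,1,0] + p ![1,0,1,2] + p ![1,0,2,0] + p ![1,2,0,2] + p ![1,2,1,0] + p ![1,2,1,2] := by
    rw [Finset.sum_filter, expand_sum_aux]
    simp only [Fin.sum_univ_three, vec4_0, vec4_1, vec4_2, vec4_3]
    simp
    linarith [hz1000, hz1001, hz1002, hz1011, hz1021, hz1022, hz1100, hz1101, hz1102, hz1110, hz1111, hz1112, hz1120, hz1121, hz1122, hz1200, hz1201, hz1211, hz1220, hz1221, hz1222]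
  have hr2 : (∑ φ ∈ Finset.univ.filter (fun φ : ZMod 4 → Fin 3 => φ 0 = (2:Fin 3)), p φ) = p ![2,0,1,0] + p ![2,0,2,0] + p ![2,0,2,1] + p ![2,1,0,1] + p ![2,1,2,0] + p ![2,1,2,1] := by
    rw [Finset.sum_filter, expand_sum_aux]
    simp only [Fin.sum_univ_three, vec4_0, vec4_1, vec4_2, vec4_3]
    simp
    linarith [hz2000, hz2001, hz2002, hz2011, hz2012, hz2022, hz2100, hz2102, hz2110, hz2111, hz2112, hz2122, hz2200, hz2201, hz2202, hz2210, hz2211, hz2212, hz2220, hz2221, hz2222]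
  have hstot : (∑ φ ∈ Finset.univ.filter (fun φ : ZMod 4 → Fin 3 => φ 0 = (0:Fin 3)), p φ) + (∑ φ ∈ Finset.univ.filter (fun φ : ZMod 4 → Fin 3 => φ 0 = (1:Fin 3)), p φ) + (∑ φ ∈ Finset.univ.filter (fun φ : ZMod 4 → Fin 3 => φ 0 = (2:Fin 3)), p φ) = 1 := by
    have h := hsum
    rw [expand_sum_aux] at h
    norm_num [Fin.sum_univ_three] at h
    linarith [hr0, hr1, hr2, hz0000, hz0001, hz0002, hz0010, hz0011, hz0012, hz0020, hz0021, hz0022, hz0100, hz0110, hz0111, hz0112, hz0120, hz0122, hz0200, hz0210, hz0211, hz0220, hz0221, hz0222, hz1000, hz1001, hz1002, hz1011, hz1021, hz1022, hz1100, hz1101, hz1102, hz1110, hz1111, hz1112, hz1120, hz1121, hz1122, hz1200, hz1201, hz1211, hz1220, hz1221, hz1222, hz2000, hz2001, hz2002, hz2011, hz2012, hz2022, hz2100, hz2102, hz2110, hz2111, hz2112, hz2122, hz2200, hz2201, hz2202, hz2210, hz2211, hz2212, hz2220, hz2221, hz2222]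
  have hq12 : p ![1,0,2,0] = (∑ φ ∈ Finset.univ.filter (fun φ : ZMod 4 → Fin 3 => φ 0 = (1:Fin 3)), p φ) * (∑ φ ∈ Finset.univ.filter (fun φ : ZMod 4 → Fin 3 => φ 0 = (2:Fin 3)), p φ) := by
    have hL : (∑ φ ∈ Finset.univ.filter (fun φ : ZMod 4 → Fin 3 => φ 0 = (1:Fin 3) ∧ φ 2 = (2:Fin 3)), p φ) = p ![1,0,2,0] := by
      rw [Finset.sum_filter, expand_sum_aux]
      simp only [Fin.sum_univ_three, vec4_0, vec4_1, vec4_2, vec4_3]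
      simp
      linarith [hz1021, hz1022, hz1120, hz1121, hz1122, hz1220, hz1221, hz1222]
    have h := hind 0 1 2
    rw [show ((0:ZMod 4)+2) = 2 from by decide] at h
    rw [h02 2] at h
    exact hL.symm.trans h
  have hq02 : p ![0,1,2,1] = (∑ φ ∈ Finset.univ.filter (fun φ : ZMod 4 → Fin 3 => φ 0 = (0:Fin 3)), p φ) * (∑ φ ∈ Finset.univ.filter (fun φ : ZMod 4 → Fin 3 => φ 0 = (2:Fin 3)), p φ) := by
    have hL : (∑ φ ∈ Finset.univ.filter (fun φ : ZMod 4 → Fin 3 => φ 0 = (0:Fin 3) ∧ φ 2 = (2:Fin 3)), p φ) = p ![0,1,2,1] := by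
      rw [Finset.sum_filter, expand_sum_aux]
      simp only [Fin.sum_univ_three, vec4_0, vec4_1, vec4_2, vec4_3]
      simp
      linarith [hz0020, hz0021, hz0022, hz0120, hz0122, hz0220, hz0221, hz0222]
    have h := hind 0 0 2
    rw [show ((0:ZMod 4)+2) = 2 from by decide] at h
    rw [h02 2] at h
    exact hL.symm.trans h
  have hq01 : p ![0,2,1,2] = (∑ φ ∈ Finset.univ.filter (fun φ : ZMod 4 → Fin 3 => φ 0 = (0:Fin 3)), p φ) * (∑ φ ∈ Finset.univ.filter (fun φ : ZMod 4 → Fin 3 => φ 0 = (1:Fin 3)), p φ) := by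
    have hL : (∑ φ ∈ Finset.univ.filter (fun φ : ZMod 4 → Fin 3 => φ 0 = (0:Fin 3) ∧ φ 2 = (1:Fin 3)), p φ) = p ![0,2,1,2] := by
      rw [Finset.sum_filter, expand_sum_aux]
      simp only [Fin.sum_univ_three, vec4_0, vec4_1, vec4_2, vec4_3]
      simp
      linarith [hz0010, hz0011, hz0012, hz0110, hz0111, hz0112, hz0210, hz0211]
    have h := hind 0 0 1
    rw [show ((0:ZMod 4)+2) = 2 from by decide] at h
    rw [h02 1] at h
    exact hL.symm.trans h
  have hn0 : 0 ≤ (∑ φ ∈ Finset.univ.filter (fun φ : ZMod 4 → Fin 3 => φ 0 = (0:Fin 3)), p φ) := Finset.sum_nonneg fun φ _ => hnonneg φ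
  have hn1 : 0 ≤ (∑ φ ∈ Finset.univ.filter (fun φ : ZMod 4 → Fin 3 => φ 0 = (1:Fin 3)), p φ) := Finset.sum_nonneg fun φ _ => hnonneg φ
  have hn2 : 0 ≤ (∑ φ ∈ Finset.univ.filter (fun φ : ZMod 4 → Fin 3 => φ 0 = (2:Fin 3)), p φ) := Finset.sum_nonneg fun φ _ => hnonneg φ
  have hkey0 : p ![1,2,1,2] = ((∑ φ ∈ Finset.univ.filter (fun φ : ZMod 4 → Fin 3 => φ 0 = (1:Fin 3)), p φ) + (∑ φ ∈ Finset.univ.filter (fun φ : ZMod 4 → Fin 3 => φ 0 = (2:Fin 3)), p φ) - (∑ φ ∈ Finset.univ.filter (fun φ : ZMod 4 → Fin 3 => φ 0 = (0:Fin 3)), p φ))/2 - p ![0,2,1,2] - p ![0,1,2,1] := by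
    linarith [hr0, hr1, hr2, hc0101, hc0102, hc0121, hc0201, hc0202, hc0212, hc1010, hc1012, hc1020, hc1202, hc1210, hc1212, hc2010, hc2020, hc2021, hc2101, hc2120, hc2121]
  have hkey1 : p ![0,2,0,2] = ((∑ φ ∈ Finset.univ.filter (fun φ : ZMod 4 → Fin 3 => φ 0 = (0:Fin 3)), p φ) + (∑ φ ∈ Finset.univ.filter (fun φ : ZMod 4 → Fin 3 => φ 0 = (2:Fin 3)), p φ) - (∑ φ ∈ Finset.univ.filter (fun φ : ZMod 4 → Fin 3 => φ 0 = (1:Fin 3)), p φ))/2 - p ![0,2,1,2] - p ![1,0,2,0] := by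
    linarith [hr0, hr1, hr2, hc0101, hc0102, hc0121, hc0201, hc0202, hc0212, hc1010, hc1012, hc1020, hc1202, hc1210, hc1212, hc2010, hc2020, hc2021, hc2101, hc2120, hc2121]
  have hkey2 : p ![0,1,0,1] = ((∑ φ ∈ Finset.univ.filter (fun φ : ZMod 4 → Fin 3 => φ 0 = (0:Fin 3)), p φ) + (∑ φ ∈ Finset.univ.filter (fun φ : ZMod 4 → Fin 3 => φ 0 = (1:Fin 3)), p φ) - (∑ φ ∈ Finset.univ.filter (fun φ : ZMod 4 → Fin 3 => φ 0 = (2:Fin 3)), p φ))/2 - p ![0,1,2,1] - p ![1,0,2,0] := by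
    linarith [hr0, hr1, hr2, hc0101, hc0102, hc0121, hc0201, hc0202, hc0212, hc1010, hc1012, hc1020, hc1202, hc1210, hc1212, hc2010, hc2020, hc2021, hc2101, hc2120, hc2121]
  have hf3 : ∀ s : Fin 3, s = 0 ∨ s = 1 ∨ s = 2 := by decide
  have hall : ∀ w : ZMod 4, w = 0 ∨ w = 1 ∨ w = 2 ∨ w = 3 := by decide
  intro v σ
  have hv : (∑ φ ∈ Finset.univ.filter (fun φ : ZMod 4 → Fin 3 => φ v = σ), p φ) = ∑ φ ∈ Finset.univ.filter (fun φ : ZMod 4 → Fin 3 => φ 0 = σ), p φ := by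
    rcases hall v with h | h | h | h <;> subst h
    · rfl
    · exact h01 σ
    · exact (h12 σ).trans (h01 σ)
    · exact (h23 σ).trans ((h12 σ).trans (h01 σ))
  rw [hv]
  rcases hf3 σ with h | h | h <;> subst h
  · refine final_ineq_aux _ _ _ hn1 hn2 (by linarith [hstot]) ?_
    have hk : 0 ≤ ((∑ φ ∈ Finset.univ.filter (fun φ : ZMod 4 → Fin 3 => φ 0 = (1:Fin 3)), p φ) + (∑ φ ∈ Finset.univ.filter (fun φ : ZMod 4 → Fin 3 => φ 0 = (2:Fin 3)), p φ) - (∑ φ ∈ Finset.univ.filter (fun φ : ZMod 4 → Fin 3 => φ 0 = (0:Fin 3)), p φ))/2 - (∑ φ ∈ Finset.univ.filter (fun φ : ZMod 4 → Fin 3 => φ 0 = (1:Fin 3)), p φ)*(∑ φ ∈ Finset.univ.filter (fun φ : ZMod 4 → Fin 3 => φ 0 = (0:Fin 3)), p φ) - (∑ φ ∈ Finset.univ.filter (fun φ : ZMod 4 → Fin 3 => φ 0 = (2:Fin 3)), p φ)*(∑ φ ∈ Finset.univ.filter (fun φ : ZMod 4 → Fin 3 => φ 0 = (0:Fin 3)),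 p φ) := by
      linarith [hnonneg ![1,2,1,2], hkey0, hq01, hq02, mul_comm (∑ φ ∈ Finset.univ.filter (fun φ : ZMod 4 → Fin 3 => φ 0 = (1:Fin 3)), p φ) (∑ φ ∈ Finset.univ.filter (fun φ : ZMod 4 → Fin 3 => φ 0 = (0:Fin 3)), p φ), mul_comm (∑ φ ∈ Finset.univ.filter (fun φ : ZMod 4 → Fin 3 => φ 0 = (2:Fin 3)), p φ) (∑ φ ∈ Finset.univ.filter (fun φ : ZMod 4 → Fin 3 => φ 0 = (0:Fin 3)), p φ)]
    exact hk
  · refine final_ineq_aux _ _ _ hn0 hn2 (by linarith [hstot]) ?_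
    have hk : 0 ≤ ((∑ φ ∈ Finset.univ.filter (fun φ : ZMod 4 → Fin 3 => φ 0 = (0:Fin 3)), p φ) + (∑ φ ∈ Finset.univ.filter (fun φ : ZMod 4 → Fin 3 => φ 0 = (2:Fin 3)), p φ) - (∑ φ ∈ Finset.univ.filter (fun φ : ZMod 4 → Fin 3 => φ 0 = (1:Fin 3)), p φ))/2 - (∑ φ ∈ Finset.univ.filter (fun φ : ZMod 4 → Fin 3 => φ 0 = (0:Fin 3)), p φ)*(∑ φ ∈ Finset.univ.filter (fun φ : ZMod 4 → Fin 3 => φ 0 = (1:Fin 3)), p φ) - (∑ φ ∈ Finset.univ.filter (fun φ : ZMod 4 → Fin 3 => φ 0 = (2:Fin 3)), p φ)*(∑ φ ∈ Finset.univ.filter (fun φ : ZMod 4 → Fin 3 => φ 0 = (1:Fin 3)), p φ) := by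
      linarith [hnonneg ![0,2,0,2], hkey1, hq01, hq12, mul_comm (∑ φ ∈ Finset.univ.filter (fun φ : ZMod 4 → Fin 3 => φ 0 = (0:Fin 3)), p φ) (∑ φ ∈ Finset.univ.filter (fun φ : ZMod 4 → Fin 3 => φ 0 = (1:Fin 3)), p φ), mul_comm (∑ φ ∈ Finset.univ.filter (fun φ : ZMod 4 → Fin 3 => φ 0 = (2:Fin 3)), p φ) (∑ φ ∈ Finset.univ.filter (fun φ : ZMod 4 → Fin 3 => φ 0 = (1:Fin 3)), p φ)]
    exact hk
  · refine final_ineq_aux _ _ _ hn0 hn1 (by linarith [hstot]) ?_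
    have hk : 0 ≤ ((∑ φ ∈ Finset.univ.filter (fun φ : ZMod 4 → Fin 3 => φ 0 = (0:Fin 3)), p φ) + (∑ φ ∈ Finset.univ.filter (fun φ : ZMod 4 → Fin 3 => φ 0 = (1:Fin 3)), p φ) - (∑ φ ∈ Finset.univ.filter (fun φ : ZMod 4 → Fin 3 => φ 0 = (2:Fin 3)), p φ))/2 - (∑ φ ∈ Finset.univ.filter (fun φ : ZMod 4 → Fin 3 => φ 0 = (0:Fin 3)), p φ)*(∑ φ ∈ Finset.univ.filter (fun φ : ZMod 4 → Fin 3 => φ 0 = (2:Fin 3)), p φ) - (∑ φ ∈ Finset.univ.filter (fun φ : ZMod 4 → Fin 3 => φ 0 = (1:Fin 3)), p φ)*(∑ φ ∈ Finset.univ.filter (fun φ : ZMod 4 → Fin 3 => φ 0 = (2:Fin 3)), p φ) := by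
      linarith [hnonneg ![0,1,0,1], hkey2, hq02, hq12, mul_comm (∑ φ ∈ Finset.univ.filter (fun φ : ZMod 4 → Fin 3 => φ 0 = (0:Fin 3)), p φ) (∑ φ ∈ Finset.univ.filter (fun φ : ZMod 4 → Fin 3 => φ 0 = (2:Fin 3)), p φ), mul_comm (∑ φ ∈ Finset.univ.filter (fun φ : ZMod 4 → Fin 3 => φ 0 = (1:Fin 3)), p φ) (∑ φ ∈ Finset.univ.filter (fun φ : ZMod 4 → Fin 3 => φ 0 = (2:Fin 3)), p φ)]
    exact hk
end

section
/- Let n, k, r be positive integers with k ≥ 2, and let q < 1. Suppose every random 3-coloring Ψ of a k-node line segment that is independent beyond distance r has success probability (probability of being a proper coloring) at most q. Then every random 3-coloring Φ of the n-node cycle that is independent beyond distance r has success probability at most q^⌊n/(k+r)⌋. -/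
/-- The set of nodes covered by the gap-`r` extension of a sliding frame of length `s`
placed at node `ω` of the `n`-cycle: nodes `ω - r, ..., ω + s - 1`. -/
def frameSet (n r : ℕ) (ω : ZMod n) (s : ℕ) : Finset (ZMod n) :=
  (Finset.range (s + r)).image (fun i : ℕ => ω + (i : ZMod n) - (r : ZMod n))

/-- `ω` is a gap-`r` placement of the collection of sliding frames with lengths `s`:
the gapped extensions of the frames are pairwise disjoint. -/
def IsPlacement (n r : ℕ) {t : ℕ} (s : Fin t → ℕ) (ω : Fin t → ZMod n) : Prop :=
  ∀ j j' : Fin t, j ≠ j' →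
    Disjoint (frameSet n r (ω j) (s j)) (frameSet n r (ω j') (s j'))

/-- The probability, under the random coloring with weights `P`, that the contents of the
frames of lengths `s` placed at `ω` equal the collection of tableaux `ζ`. -/
noncomputable def jointProb {n : ℕ} [NeZero n] {C : Type} [Fintype C] [DecidableEq C]
    (P : (ZMod n → C) → ℝ) {t : ℕ} (s : Fin t → ℕ) (ω : Fin t → ZMod n)
    (ζ : (j : Fin t) → Fin (s j) → C) : ℝ :=
  ∑ φ ∈ Finset.univ.filter
      (fun φ : ZMod n → C =>
        ∀ (j : Fin t) (i : Fin (s j)), φ (ω j + ((i : ℕ) : ZMod n)) = ζ j i),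
    P φ

/-- A random coloring is cyclic if its law is invariant under rotation. -/
def Cyclic {n : ℕ} {C : Type} (P : (ZMod n → C) → ℝ) : Prop :=
  ∀ φ : ZMod n → C, P (fun v => φ (v - 1)) = P φ

/-- A random coloring of the `n`-cycle is independent at distances beyond `r`. -/
def IndependentBeyond (n r : ℕ) [NeZero n] {C : Type} [Fintype C] [DecidableEq C]
    (P : (ZMod n → C) → ℝ) : Prop :=
  Cyclic P ∧ ∃ p : (s : ℕ) → (Fin s → C) → ℝ,
    (∀ s : ℕ, (∀ ζ, 0 ≤ p s ζ) ∧ ∑ ζ : Fin s → C, p s ζ = 1) ∧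
    ∀ (t : ℕ) (s : Fin t → ℕ) (ω : Fin t → ZMod n), IsPlacement n r s ω →
      ∀ ζ : (j : Fin t) → Fin (s j) → C,
        jointProb P s ω ζ = ∏ j : Fin t, p (s j) (ζ j)

/-- A random coloring of the `n`-cycle is non-signaling at distances beyond `r`. -/
def NonSignalingBeyond (n r : ℕ) [NeZero n] {C : Type} [Fintype C] [DecidableEq C]
    (P : (ZMod n → C) → ℝ) : Prop :=
  Cyclic P ∧
    ∀ (t : ℕ) (s : Fin t → ℕ) (ω ω' : Fin t → ZMod n),
      IsPlacement n r s ω → IsPlacement n r s ω' →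
      ∀ ζ : (j : Fin t) → Fin (s j) → C,
        jointProb P s ω ζ = jointProb P s ω' ζ

/-- The set of integer positions covered by the gap-`r` extension of a length-`s` frame
placed at position `ω` of a line segment: positions `ω - r, ..., ω + s - 1`. -/
noncomputable def segFrameSet (r ω s : ℕ) : Finset ℤ :=
  Finset.Ico ((ω : ℤ) - (r : ℤ)) ((ω : ℤ) + (s : ℤ))

/-- `ω` is a gap-`r` placement of frames of lengths `s` that respects a `k`-node segment:
each (ungapped) frame lies inside the segment and the gapped extensions are pairwise
disjoint. -/
def IsSegPlacement (k r : ℕ) {t : ℕ} (s : Fin t → ℕ) (ω : Fin t → ℕ) : Prop :=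
  (∀ j : Fin t, ω j + s j ≤ k) ∧
  ∀ j j' : Fin t, j ≠ j' →
    Disjoint (segFrameSet r (ω j) (s j)) (segFrameSet r (ω j') (s j'))

/-- The probability, under the random segment coloring with weights `Q`, that the contents
of the frames of lengths `s` placed at `ω` equal the collection of tableaux `ζ`. -/
noncomputable def segJointProb {k : ℕ} {C : Type} [Fintype C] [DecidableEq C]
    (Q : (Fin k → C) → ℝ) {t : ℕ} (s : Fin t → ℕ) (ω : Fin t → ℕ)
    (ζ : (j : Fin t) → Fin (s j) → C) : ℝ :=
  ∑ ψ ∈ Finset.univ.filter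
      (fun ψ : Fin k → C =>
        ∀ (j : Fin t) (i : Fin (s j)) (h : ω j + (i : ℕ) < k), ψ ⟨ω j + (i : ℕ), h⟩ = ζ j i),
    Q ψ

/-- A random coloring of a `k`-node line segment is independent at distances beyond `r`. -/
def SegIndependentBeyond (k r : ℕ) {C : Type} [Fintype C] [DecidableEq C]
    (Q : (Fin k → C) → ℝ) : Prop :=
  ∃ p : (s : ℕ) → (Fin s → C) → ℝ,
    (∀ s : ℕ, (∀ ζ, 0 ≤ p s ζ) ∧ ∑ ζ : Fin s → C, p s ζ = 1) ∧
    ∀ (t : ℕ) (s : Fin t → ℕ) (ω : Fin t → ℕ), IsSegPlacement k r s ω →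
      ∀ ζ : (j : Fin t) → Fin (s j) → C,
        segJointProb Q s ω ζ = ∏ j : Fin t, p (s j) (ζ j)

/-- A random coloring of a `k`-node line segment is non-signaling at distances beyond `r`. -/
def SegNonSignalingBeyond (k r : ℕ) {C : Type} [Fintype C] [DecidableEq C]
    (Q : (Fin k → C) → ℝ) : Prop :=
  ∀ (t : ℕ) (s : Fin t → ℕ) (ω ω' : Fin t → ℕ),
    IsSegPlacement k r s ω → IsSegPlacement k r s ω' →
    ∀ ζ : (j : Fin t) → Fin (s j) → C,
      segJointProb Q s ω ζ = segJointProb Q s ω' ζ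

open Finset

lemma natCast_zmod_inj {n a b : ℕ} (ha : a < n) (hb : b < n)
    (h : (a : ZMod n) = (b : ZMod n)) : a = b := by
  haveI : NeZero n := ⟨by omega⟩
  have := congrArg ZMod.val h
  rwa [ZMod.val_cast_of_lt ha, ZMod.val_cast_of_lt hb] at this

lemma intCast_zmod_inj {n : ℕ} {a b : ℤ} (h : (a : ZMod n) = (b : ZMod n))
    (hab : |a - b| < n) : a = b := by
  rw [ZMod.intCast_eq_intCast_iff] at h
  have hd : (n : ℤ) ∣ b - a := h.dvd
  rcases eq_or_ne (b - a) 0 with h0 | h0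
  · omega
  · have h1 : (n : ℤ) ≤ |b - a| := Int.le_of_dvd (abs_pos.mpr h0) ((dvd_abs _ _).mpr hd)
    rw [abs_sub_comm] at hab
    linarith

lemma fiber_sum {α β : Type*} [Fintype α] [DecidableEq α] [DecidableEq β]
    (f : α → β) (S : Finset β) (g : α → ℝ) :
    ∑ b ∈ S, ∑ a ∈ univ.filter (fun a => f a = b), g a
      = ∑ a ∈ univ.filter (fun a => f a ∈ S), g a := by
  simp_rw [Finset.sum_filter]
  rw [Finset.sum_comm]
  refine Finset.sum_congr rfl fun a _ => ?_
  exact Finset.sum_ite_eq S (f a) (fun _ => g a)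

/-- if every random 3-coloring of a k-node line segment that is independent
beyond distance r succeeds (is proper) with probability at most q < 1, then every random
3-coloring of the n-node cycle that is independent beyond distance r succeeds with
probability at most q^⌊n/(k+r)⌋. -/


theorem segment_bound_to_exponential_bound
    (n k r : ℕ) [NeZero n] (hn : 0 < n) (hk : 2 ≤ k) (hr : 0 < r)
    (q : ℝ) (hq : q < 1)
    (hseg : ∀ Q : (Fin k → Fin 3) → ℝ,
      (∀ ψ, 0 ≤ Q ψ) → (∑ ψ : Fin k → Fin 3, Q ψ = 1) →
      SegIndependentBeyond k r Q →
      (∑ ψ ∈ Finset.univ.filter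
          (fun ψ : Fin k → Fin 3 =>
            ∀ (i : Fin k) (h : (i : ℕ) + 1 < k), ψ i ≠ ψ ⟨(i : ℕ) + 1, h⟩),
        Q ψ) ≤ q) :
    ∀ P : (ZMod n → Fin 3) → ℝ,
      (∀ φ, 0 ≤ P φ) → (∑ φ : ZMod n → Fin 3, P φ = 1) →
      IndependentBeyond n r P →
      (∑ φ ∈ Finset.univ.filter
          (fun φ : ZMod n → Fin 3 => ∀ v : ZMod n, φ v ≠ φ (v + 1)),
        P φ) ≤ q ^ (n / (k + r)) := by
  intro P hP0 hP1 hPind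
  obtain ⟨hcyc, p, hp, hjoint⟩ := hPind
  by_cases hm0 : n / (k + r) = 0
  · rw [hm0, pow_zero]
    calc (∑ φ ∈ Finset.univ.filter
          (fun φ : ZMod n → Fin 3 => ∀ v : ZMod n, φ v ≠ φ (v + 1)), P φ)
        ≤ ∑ φ : ZMod n → Fin 3, P φ :=
          Finset.sum_le_sum_of_subset_of_nonneg (Finset.filter_subset _ _)
            (fun φ _ _ => hP0 φ)
      _ = 1 := hP1
  set m := n / (k + r) with hmdef
  have hm1 : 1 ≤ m := Nat.one_le_iff_ne_zero.mpr hm0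
  have hkr : 0 < k + r := by omega
  have hkrn : k + r ≤ n := by
    by_contra hc
    exact hm0 (Nat.div_eq_of_lt (by omega))
  have hmn : m * (k + r) ≤ n := Nat.div_mul_le_self n (k + r)
  -- marginal of a single length-k frame at position 0
  have hmarg : ∀ ψ : Fin k → Fin 3,
      p k ψ = ∑ φ ∈ univ.filter
        (fun φ : ZMod n → Fin 3 => (fun i : Fin k => φ ((i : ℕ) : ZMod n)) = ψ), P φ := by
    intro ψ
    have hpl : IsPlacement n r (fun _ : Fin 1 => k) (fun _ => (0 : ZMod n)) := by
      intro j j' hjj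
      exact absurd (Subsingleton.elim j j') hjj
    have h1 := hjoint 1 (fun _ : Fin 1 => k) (fun _ => (0 : ZMod n)) hpl (fun _ => ψ)
    rw [Fin.prod_univ_one] at h1
    rw [← h1, jointProb]
    refine Finset.sum_congr (Finset.filter_congr fun φ _ => ?_) fun _ _ => rfl

    constructor
    · intro h
      funext i
      have := h 0 i
      rwa [zero_add] at this
    · intro h j i
      rw [zero_add]
      exact congrFun h i
  -- segment coloring p k is independent beyond r
  have hQind : SegIndependentBeyond k r (p k) := by
    refine ⟨p, hp, ?_⟩
    intro t s ω hsp ζ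
    have hplace : IsPlacement n r s (fun j => ((ω j : ℕ) : ZMod n)) := by
      intro j j' hjj
      have hdis := hsp.2 j j' hjj
      rw [Finset.disjoint_left] at hdis ⊢
      intro x hx hx'
      simp only [frameSet, Finset.mem_image, Finset.mem_range] at hx hx'
      obtain ⟨i, hi, hxi⟩ := hx
      obtain ⟨i', hi', hxi'⟩ := hx'
      have hb1 := hsp.1 j
      have hb2 := hsp.1 j'
      have e1 : ((ω j : ZMod n) + (i : ZMod n) - (r : ZMod n))
          = (((ω j : ℤ) + (i : ℤ) - (r : ℤ) : ℤ) : ZMod n) := by push_cast; ring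
      have e1' : ((ω j' : ZMod n) + (i' : ZMod n) - (r : ZMod n))
          = (((ω j' : ℤ) + (i' : ℤ) - (r : ℤ) : ℤ) : ZMod n) := by push_cast; ring
      have heq : (((ω j : ℤ) + (i : ℤ) - (r : ℤ) : ℤ) : ZMod n)
          = (((ω j' : ℤ) + (i' : ℤ) - (r : ℤ) : ℤ) : ZMod n) := by
        rw [← e1, ← e1', hxi, hxi']
      have hieq : ((ω j : ℤ) + (i : ℤ) - (r : ℤ)) = ((ω j' : ℤ) + (i' : ℤ) - (r : ℤ)) := by
        apply intCast_zmod_inj heq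
        rw [abs_lt]
        constructor <;> push_cast <;> omega
      refine hdis (a := (ω j : ℤ) + (i : ℤ) - (r : ℤ)) ?_ ?_
      · simp only [segFrameSet, Finset.mem_Ico]
        omega
      · rw [hieq]
        simp only [segFrameSet, Finset.mem_Ico]
        omega
    have hmain : segJointProb (p k) s ω ζ
        = jointProb P s (fun j => ((ω j : ℕ) : ZMod n)) ζ := by
      rw [segJointProb, Finset.sum_congr rfl (fun ψ _ => hmarg ψ),
        fiber_sum (fun φ : ZMod n → Fin 3 => (fun i : Fin k => φ ((i : ℕ) : ZMod n))) _ P,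
        jointProb]
      refine Finset.sum_congr (Finset.filter_congr fun φ _ => ?_) fun _ _ => rfl
      simp only [Finset.mem_filter, Finset.mem_univ, true_and, eq_iff_iff]
      constructor
      · intro h j i
        have hik : ω j + (i : ℕ) < k := by
          have := i.isLt
          have := hsp.1 j
          omega
        have h2 := h j i hik
        rw [← h2]
        push_cast
        ring_nf
      · intro h j i hik
        have h2 := h j i
        rw [← h2]
        push_cast
        ring_nf
    rw [hmain]
    exact hjoint t s _ hplace ζ
  have hxq := hseg (p k) (hp k).1 (hp k).2 hQind
  set Pr : Finset (Fin k → Fin 3) := univ.filter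
    (fun ψ : Fin k → Fin 3 =>
      ∀ (i : Fin k) (h : (i : ℕ) + 1 < k), ψ i ≠ ψ ⟨(i : ℕ) + 1, h⟩) with hPrdef
  have hx0 : 0 ≤ ∑ ψ ∈ Pr, p k ψ := Finset.sum_nonneg fun ψ _ => (hp k).1 ψ
  -- the m frames on the cycle
  set Ω : Fin m → ZMod n := fun j => (((j : ℕ) * (k + r) + r : ℕ) : ZMod n) with hΩdef
  have hval : ∀ (j : Fin m) (i : ℕ), i < k + r →
      Ω j + (i : ZMod n) - (r : ZMod n) = (((j : ℕ) * (k + r) + i : ℕ) : ZMod n) := by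
    intro j i _
    rw [hΩdef]
    push_cast
    ring
  have hlt : ∀ (j : Fin m) (i : ℕ), i < k + r → (j : ℕ) * (k + r) + i < n := by
    intro j i hi
    have hj : (j : ℕ) + 1 ≤ m := j.isLt
    have : ((j : ℕ) + 1) * (k + r) ≤ m * (k + r) := Nat.mul_le_mul_right _ hj
    have : (j : ℕ) * (k + r) + i < ((j : ℕ) + 1) * (k + r) := by
      rw [add_mul, one_mul]; omega
    omega
  have hΩ : IsPlacement n r (fun _ : Fin m => k) Ω := by
    intro j j' hjj
    rw [Finset.disjoint_left]
    intro x hx hx'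
    simp only [frameSet, Finset.mem_image, Finset.mem_range] at hx hx'
    obtain ⟨i, hi, hxi⟩ := hx
    obtain ⟨i', hi', hxi'⟩ := hx'
    have heq : (((j : ℕ) * (k + r) + i : ℕ) : ZMod n)
        = (((j' : ℕ) * (k + r) + i' : ℕ) : ZMod n) := by
      rw [← hval j i hi, ← hval j' i' hi', hxi, hxi']
    have hnat : (j : ℕ) * (k + r) + i = (j' : ℕ) * (k + r) + i' :=
      natCast_zmod_inj (hlt j i hi) (hlt j' i' hi') heq
    have hdiv : ∀ (u v : ℕ), v < k + r → ((k + r) * u + v) / (k + r) = u := by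
      intro u v hv
      rw [Nat.mul_add_div hkr, Nat.div_eq_of_lt hv, add_zero]
    have hj : (j : ℕ) = (j' : ℕ) := by
      have e1 := hdiv (j : ℕ) i hi
      have e2 := hdiv (j' : ℕ) i' hi'
      rw [mul_comm] at hnat
      rw [← e1, ← e2, hnat, mul_comm]
    exact hjj (Fin.ext hj)
  have key : (∑ φ ∈ Finset.univ.filter
      (fun φ : ZMod n → Fin 3 => ∀ v : ZMod n, φ v ≠ φ (v + 1)), P φ)
      ≤ (∑ ψ ∈ Pr, p k ψ) ^ m := by
    calc (∑ φ ∈ Finset.univ.filter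
        (fun φ : ZMod n → Fin 3 => ∀ v : ZMod n, φ v ≠ φ (v + 1)), P φ)
        ≤ ∑ φ ∈ univ.filter
            (fun φ : ZMod n → Fin 3 =>
              (fun (j : Fin m) (i : Fin k) => φ (Ω j + ((i : ℕ) : ZMod n)))
                ∈ Fintype.piFinset (fun _ : Fin m => Pr)), P φ := by
          refine Finset.sum_le_sum_of_subset_of_nonneg ?_ (fun φ _ _ => hP0 φ)
          intro φ hφ
          simp only [Finset.mem_filter, Finset.mem_univ, true_and] at hφ ⊢
          rw [Fintype.mem_piFinset]
          intro j
          rw [hPrdef]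
          simp only [Finset.mem_filter, Finset.mem_univ, true_and]
          intro i h
          have hφv := hφ (Ω j + ((i : ℕ) : ZMod n))
          have e : ((((i : ℕ) + 1 : ℕ)) : ZMod n) = ((i : ℕ) : ZMod n) + 1 := by
            push_cast; ring
          rw [e, ← add_assoc]
          exact hφv
      _ = ∑ ζ ∈ Fintype.piFinset (fun _ : Fin m => Pr),
            ∑ φ ∈ univ.filter (fun φ : ZMod n → Fin 3 =>
              (fun (j : Fin m) (i : Fin k) => φ (Ω j + ((i : ℕ) : ZMod n))) = ζ), P φ :=
          (fiber_sum _ _ _).symm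
      _ = ∑ ζ ∈ Fintype.piFinset (fun _ : Fin m => Pr),
            jointProb P (fun _ : Fin m => k) Ω ζ := by
          refine Finset.sum_congr rfl fun ζ _ => ?_
          rw [jointProb]
          refine Finset.sum_congr (Finset.filter_congr fun φ _ => ?_) fun _ _ => rfl

          constructor
          · intro h j i
            exact congrFun (congrFun h j) i
          · intro h
            funext j i
            exact h j i
      _ = ∑ ζ ∈ Fintype.piFinset (fun _ : Fin m => Pr), ∏ j : Fin m, p k (ζ j) :=
          Finset.sum_congr rfl fun ζ _ => hjoint m (fun _ => k) Ω hΩ ζ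
      _ = ∏ _j : Fin m, ∑ ψ ∈ Pr, p k ψ := (Finset.prod_univ_sum _ _).symm
      _ = (∑ ψ ∈ Pr, p k ψ) ^ m := by
          rw [Finset.prod_const, Finset.card_univ, Fintype.card_fin]
  exact le_trans key (pow_le_pow_left₀ hx0 hxq m)
end

section
/- Let n = 11, and for a coloring φ of the 11-node cycle define β_{φ,d} = (1/11)·|{v ∈ ℤ/11ℤ : φ(v) = φ(v+d)}|. Set p = (30/41, 11/41, 0, 0) and p' = (0, 0, 14/41, 27/41) as distributions over distances d = 2, 3, 4, 5. Then for every proper 3-coloring φ of the 11-node cycle, (p - p')·(β_{φ,2}, β_{φ,3}, β_{φ,4}, β_{φ,5}) ≥ 1/451. -/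
def sv (b : Bool) : ZMod 3 := if b then 2 else 1

def keyB (b0 b1 b2 b3 b4 b5 b6 b7 b8 b9 b10 : Bool) : Bool :=
  !(decide (sv b0 + sv b1 + sv b2 + sv b3 + sv b4 + sv b5 + sv b6 + sv b7 + sv b8 + sv b9 + sv b10 = (0 : ZMod 3))) || decide (14 * ((if sv b0 + sv b1 + sv b2 + sv b3 = 0 then 1 else 0) + (if sv b1 + sv b2 + sv b3 + sv b4 = 0 then 1 else 0) + (if sv b2 + sv b3 + sv b4 + sv b5 = 0 then 1 else 0) + (if sv b3 + sv b4 + sv b5 + sv b6 = 0 then 1 else 0) + (if sv b4 + sv b5 + sv b6 + sv b7 = 0 then 1 else 0) + (if sv b5 + sv b6 + sv b7 + sv b8 = 0 then 1 else 0) + (if sv b6 + sv b7 + sv b8 + sv b9 = 0 then 1 else 0) + (if sv b7 + sv b8 + sv b9 + sv b10 = 0 then 1 else 0) + (if sv b8 + sv b9 + sv b10 + sv b0 = 0 then 1 else 0) + (if sv b9 + sv b10 + sv b0 + sv b1 = 0 then 1 else 0) + (if sv b10 + sv b0 + sv b1 + sv b2 = 0 then 1 else 0)) + 27 * ((if sv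 b0 + sv b1 + sv b2 + sv b3 + sv b4 = 0 then 1 else 0) + (if sv b1 + sv b2 + sv b3 + sv b4 + sv b5 = 0 then 1 else 0) + (if sv b2 + sv b3 + sv b4 + sv b5 + sv b6 = 0 then 1 else 0) + (if sv b3 + sv b4 + sv b5 + sv b6 + sv b7 = 0 then 1 else 0) + (if sv b4 + sv b5 + sv b6 + sv b7 + sv b8 = 0 then 1 else 0) + (if sv b5 + sv b6 + sv b7 + sv b8 + sv b9 = 0 then 1 else 0) + (if sv b6 + sv b7 + sv b8 + sv b9 + sv b10 = 0 then 1 else 0) + (if sv b7 + sv b8 + sv b9 + sv b10 + sv b0 = 0 then 1 else 0) + (if sv b8 + sv b9 + sv b10 + sv b0 + sv b1 = 0 then 1 else 0) + (if sv b9 + sv b10 + sv b0 + sv b1 + sv b2 = 0 then 1 else 0) + (if sv b10 + sv b0 + sv b1 + sv b2 + sv b3 = 0 then 1 else 0)) + 1 ≤ 30 * ((if sv b0 + sv b1 = 0 then 1 else 0) + (if sv b1 + sv b2 = 0 then 1 else 0) + (if sv b2 + sv b3 = 0 then 1 else 0) + (if sv b3 + sv b4 = 0 then 1 else 0) + (if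 sv b4 + sv b5 = 0 then 1 else 0) + (if sv b5 + sv b6 = 0 then 1 else 0) + (if sv b6 + sv b7 = 0 then 1 else 0) + (if sv b7 + sv b8 = 0 then 1 else 0) + (if sv b8 + sv b9 = 0 then 1 else 0) + (if sv b9 + sv b10 = 0 then 1 else 0) + (if sv b10 + sv b0 = 0 then 1 else 0)) + 11 * ((if sv b0 + sv b1 + sv b2 = 0 then 1 else 0) + (if sv b1 + sv b2 + sv b3 = 0 then 1 else 0) + (if sv b2 + sv b3 + sv b4 = 0 then 1 else 0) + (if sv b3 + sv b4 + sv b5 = 0 then 1 else 0) + (if sv b4 + sv b5 + sv b6 = 0 then 1 else 0) + (if sv b5 + sv b6 + sv b7 = 0 then 1 else 0) + (if sv b6 + sv b7 + sv b8 = 0 then 1 else 0) + (if sv b7 + sv b8 + sv b9 = 0 then 1 else 0) + (if sv b8 + sv b9 + sv b10 = 0 then 1 else 0) + (if sv b9 + sv b10 + sv b0 = 0 then 1 else 0) + (if sv b10 + sv b0 + sv b1 = 0 then 1 else 0)))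

set_option maxRecDepth 10000 in
lemma key_s16 : ∀ b0 b1 b2 b3 b4 b5 b6 b7 b8 b9 b10 : Bool, keyB b0 b1 b2 b3 b4 b5 b6 b7 b8 b9 b10 = true := by decide +kernel

def psi (f : ZMod 11 → Fin 3) (v : ZMod 11) : ZMod 3 := ((f v).val : ZMod 3)
def dlt (f : ZMod 11 → Fin 3) (v : ZMod 11) : ZMod 3 := psi f (v + 1) - psi f v

lemma val3 : ∀ i j : Fin 3, ((i.val : ZMod 3) = (j.val : ZMod 3)) ↔ i = j := by decide

lemma sv_spec : ∀ x : ZMod 3, x ≠ 0 → sv (decide (x = 2)) = x := by decide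

lemma cond2 (f : ZMod 11 → Fin 3) (v : ZMod 11) : (dlt f v + dlt f (v + 1) = 0) ↔ (f v = f (v + 2)) := by
  have w : dlt f v + dlt f (v + 1) = psi f (v + 2) - psi f v := by
    simp only [dlt]
    rw [show v + 1 + 1 = v + 2 from by ring]
    ring
  rw [w, sub_eq_zero, psi, psi, val3, eq_comm]

lemma cond3 (f : ZMod 11 → Fin 3) (v : ZMod 11) : (dlt f v + dlt f (v + 1) + dlt f (v + 2) = 0) ↔ (f v = f (v + 3)) := by
  have w : dlt f v + dlt f (v + 1) + dlt f (v + 2) = psi f (v + 3) - psi f v := by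
    simp only [dlt]
    rw [show v + 1 + 1 = v + 2 from by ring, show v + 2 + 1 = v + 3 from by ring]
    ring
  rw [w, sub_eq_zero, psi, psi, val3, eq_comm]

lemma cond4 (f : ZMod 11 → Fin 3) (v : ZMod 11) : (dlt f v + dlt f (v + 1) + dlt f (v + 2) + dlt f (v + 3) = 0) ↔ (f v = f (v + 4)) := by
  have w : dlt f v + dlt f (v + 1) + dlt f (v + 2) + dlt f (v + 3) = psi f (v + 4) - psi f v := by
    simp only [dlt]
    rw [show v + 1 + 1 = v + 2 from by ring, show v + 2 + 1 = v + 3 from by ring, show v + 3 + 1 = v + 4 from by ring]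
    ring
  rw [w, sub_eq_zero, psi, psi, val3, eq_comm]

lemma cond5 (f : ZMod 11 → Fin 3) (v : ZMod 11) : (dlt f v + dlt f (v + 1) + dlt f (v + 2) + dlt f (v + 3) + dlt f (v + 4) = 0) ↔ (f v = f (v + 5)) := by
  have w : dlt f v + dlt f (v + 1) + dlt f (v + 2) + dlt f (v + 3) + dlt f (v + 4) = psi f (v + 5) - psi f v := by
    simp only [dlt]
    rw [show v + 1 + 1 = v + 2 from by ring, show v + 2 + 1 = v + 3 from by ring, show v + 3 + 1 = v + 4 from by ring, show v + 4 + 1 = v + 5 from by ring]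
    ring
  rw [w, sub_eq_zero, psi, psi, val3, eq_comm]

lemma card_expand (p : ZMod 11 → Prop) [DecidablePred p] :
    (Finset.univ.filter p).card =
      (if p 0 then 1 else 0) + (if p 1 then 1 else 0) + (if p 2 then 1 else 0) +
      (if p 3 then 1 else 0) + (if p 4 then 1 else 0) + (if p 5 then 1 else 0) +
      (if p 6 then 1 else 0) + (if p 7 then 1 else 0) + (if p 8 then 1 else 0) +
      (if p 9 then 1 else 0) + (if p 10 then 1 else 0) := by
  rw [Finset.card_filter]
  show (∑ v : Fin 11, @ite ℕ (p v) (‹DecidablePred p› v) 1 0) = _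
  simp only [Fin.sum_univ_succ, Finset.univ_unique, Fin.default_eq_zero, Finset.sum_singleton,
    show (Fin.succ 0 : Fin 11) = (1 : ZMod 11) from rfl,
    show ((Fin.succ 0).succ : Fin 11) = (2 : ZMod 11) from rfl,
    show ((Fin.succ 0).succ.succ : Fin 11) = (3 : ZMod 11) from rfl,
    show ((Fin.succ 0).succ.succ.succ : Fin 11) = (4 : ZMod 11) from rfl,
    show ((Fin.succ 0).succ.succ.succ.succ : Fin 11) = (5 : ZMod 11) from rfl,
    show ((Fin.succ 0).succ.succ.succ.succ.succ : Fin 11) = (6 : ZMod 11) from rfl,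
    show ((Fin.succ 0).succ.succ.succ.succ.succ.succ : Fin 11) = (7 : ZMod 11) from rfl,
    show ((Fin.succ 0).succ.succ.succ.succ.succ.succ.succ : Fin 11) = (8 : ZMod 11) from rfl,
    show ((Fin.succ 0).succ.succ.succ.succ.succ.succ.succ.succ : Fin 11) = (9 : ZMod 11) from rfl,
    show ((Fin.succ 0).succ.succ.succ.succ.succ.succ.succ.succ.succ : Fin 11) = (10 : ZMod 11) from rfl]
  show @ite ℕ (p (0 : ZMod 11)) (‹DecidablePred p› 0) 1 0 + _ = _
  ring

lemma hsum_lemma (f : ZMod 11 → Fin 3) :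
    dlt f 0 + dlt f 1 + dlt f 2 + dlt f 3 + dlt f 4 + dlt f 5 + dlt f 6 + dlt f 7 + dlt f 8 + dlt f 9 + dlt f 10 = 0 := by
  simp only [dlt,
    show (0 + 1 : ZMod 11) = (1 : ZMod 11) from rfl,
    show (0 + 2 : ZMod 11) = (2 : ZMod 11) from rfl,
    show (0 + 3 : ZMod 11) = (3 : ZMod 11) from rfl,
    show (0 + 4 : ZMod 11) = (4 : ZMod 11) from rfl,
    show (0 + 5 : ZMod 11) = (5 : ZMod 11) from rfl,
    show (1 + 1 : ZMod 11) = (2 : ZMod 11) from rfl,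
    show (1 + 2 : ZMod 11) = (3 : ZMod 11) from rfl,
    show (1 + 3 : ZMod 11) = (4 : ZMod 11) from rfl,
    show (1 + 4 : ZMod 11) = (5 : ZMod 11) from rfl,
    show (1 + 5 : ZMod 11) = (6 : ZMod 11) from rfl,
    show (2 + 1 : ZMod 11) = (3 : ZMod 11) from rfl,
    show (2 + 2 : ZMod 11) = (4 : ZMod 11) from rfl,
    show (2 + 3 : ZMod 11) = (5 : ZMod 11) from rfl,
    show (2 + 4 : ZMod 11) = (6 : ZMod 11) from rfl,
    show (2 + 5 : ZMod 11) = (7 : ZMod 11) from rfl,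
    show (3 + 1 : ZMod 11) = (4 : ZMod 11) from rfl,
    show (3 + 2 : ZMod 11) = (5 : ZMod 11) from rfl,
    show (3 + 3 : ZMod 11) = (6 : ZMod 11) from rfl,
    show (3 + 4 : ZMod 11) = (7 : ZMod 11) from rfl,
    show (3 + 5 : ZMod 11) = (8 : ZMod 11) from rfl,
    show (4 + 1 : ZMod 11) = (5 : ZMod 11) from rfl,
    show (4 + 2 : ZMod 11) = (6 : ZMod 11) from rfl,
    show (4 + 3 : ZMod 11) = (7 : ZMod 11) from rfl,
    show (4 + 4 : ZMod 11) = (8 : ZMod 11) from rfl,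
    show (4 + 5 : ZMod 11) = (9 : ZMod 11) from rfl,
    show (5 + 1 : ZMod 11) = (6 : ZMod 11) from rfl,
    show (5 + 2 : ZMod 11) = (7 : ZMod 11) from rfl,
    show (5 + 3 : ZMod 11) = (8 : ZMod 11) from rfl,
    show (5 + 4 : ZMod 11) = (9 : ZMod 11) from rfl,
    show (5 + 5 : ZMod 11) = (10 : ZMod 11) from rfl,
    show (6 + 1 : ZMod 11) = (7 : ZMod 11) from rfl,
    show (6 + 2 : ZMod 11) = (8 : ZMod 11) from rfl,
    show (6 + 3 : ZMod 11) = (9 : ZMod 11) from rfl,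
    show (6 + 4 : ZMod 11) = (10 : ZMod 11) from rfl,
    show (6 + 5 : ZMod 11) = (0 : ZMod 11) from rfl,
    show (7 + 1 : ZMod 11) = (8 : ZMod 11) from rfl,
    show (7 + 2 : ZMod 11) = (9 : ZMod 11) from rfl,
    show (7 + 3 : ZMod 11) = (10 : ZMod 11) from rfl,
    show (7 + 4 : ZMod 11) = (0 : ZMod 11) from rfl,
    show (7 + 5 : ZMod 11) = (1 : ZMod 11) from rfl,
    show (8 + 1 : ZMod 11) = (9 : ZMod 11) from rfl,
    show (8 + 2 : ZMod 11) = (10 : ZMod 11) from rfl,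
    show (8 + 3 : ZMod 11) = (0 : ZMod 11) from rfl,
    show (8 + 4 : ZMod 11) = (1 : ZMod 11) from rfl,
    show (8 + 5 : ZMod 11) = (2 : ZMod 11) from rfl,
    show (9 + 1 : ZMod 11) = (10 : ZMod 11) from rfl,
    show (9 + 2 : ZMod 11) = (0 : ZMod 11) from rfl,
    show (9 + 3 : ZMod 11) = (1 : ZMod 11) from rfl,
    show (9 + 4 : ZMod 11) = (2 : ZMod 11) from rfl,
    show (9 + 5 : ZMod 11) = (3 : ZMod 11) from rfl,
    show (10 + 1 : ZMod 11) = (0 : ZMod 11) from rfl,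
    show (10 + 2 : ZMod 11) = (1 : ZMod 11) from rfl,
    show (10 + 3 : ZMod 11) = (2 : ZMod 11) from rfl,
    show (10 + 4 : ZMod 11) = (3 : ZMod 11) from rfl,
    show (10 + 5 : ZMod 11) = (4 : ZMod 11) from rfl]
  ring

/-- for every proper 3-coloring φ of the 11-node cycle, with
β_{φ,d} the fraction of vertices v with φ(v) = φ(v+d), one has
(30/41)β₂ + (11/41)β₃ - (14/41)β₄ - (27/41)β₅ ≥ 1/451. -/
theorem eleven_cycle_bias (φ : ZMod 11 → Fin 3)
    (hproper : ∀ v : ZMod 11, φ v ≠ φ (v + 1)) :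
    (1 : ℚ) / 451 ≤
      (30 / 41) * (((Finset.univ.filter (fun v : ZMod 11 => φ v = φ (v + 2))).card : ℚ) / 11)
      + (11 / 41) * (((Finset.univ.filter (fun v : ZMod 11 => φ v = φ (v + 3))).card : ℚ) / 11)
      - (14 / 41) * (((Finset.univ.filter (fun v : ZMod 11 => φ v = φ (v + 4))).card : ℚ) / 11)
      - (27 / 41) * (((Finset.univ.filter (fun v : ZMod 11 => φ v = φ (v + 5))).card : ℚ) / 11) := by
  have hd : ∀ v : ZMod 11, dlt φ v ≠ 0 := fun v h =>
    hproper v (((val3 (φ (v + 1)) (φ v)).mp (sub_eq_zero.mp h)).symm)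
  have H := key_s16 (decide (dlt φ 0 = 2)) (decide (dlt φ 1 = 2)) (decide (dlt φ 2 = 2)) (decide (dlt φ 3 = 2)) (decide (dlt φ 4 = 2)) (decide (dlt φ 5 = 2)) (decide (dlt φ 6 = 2)) (decide (dlt φ 7 = 2)) (decide (dlt φ 8 = 2)) (decide (dlt φ 9 = 2)) (decide (dlt φ 10 = 2))
  simp only [keyB] at H
  rw [sv_spec _ (hd 0), sv_spec _ (hd 1), sv_spec _ (hd 2), sv_spec _ (hd 3), sv_spec _ (hd 4), sv_spec _ (hd 5), sv_spec _ (hd 6), sv_spec _ (hd 7), sv_spec _ (hd 8), sv_spec _ (hd 9), sv_spec _ (hd 10)] at H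
  simp only [Bool.or_eq_true, Bool.not_eq_true', decide_eq_true_eq, decide_eq_false_iff_not] at H
  have Hi := H.resolve_left (not_not_intro (hsum_lemma φ))
  have key_nat :
      14 * (Finset.univ.filter (fun v : ZMod 11 => φ v = φ (v + 4))).card
      + 27 * (Finset.univ.filter (fun v : ZMod 11 => φ v = φ (v + 5))).card + 1
      ≤ 30 * (Finset.univ.filter (fun v : ZMod 11 => φ v = φ (v + 2))).card
      + 11 * (Finset.univ.filter (fun v : ZMod 11 => φ v = φ (v + 3))).card := by
    rw [card_expand (fun v : ZMod 11 => φ v = φ (v + 2)),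
        card_expand (fun v : ZMod 11 => φ v = φ (v + 3)),
        card_expand (fun v : ZMod 11 => φ v = φ (v + 4)),
        card_expand (fun v : ZMod 11 => φ v = φ (v + 5))]
    simp only [← cond2 φ, ← cond3 φ, ← cond4 φ, ← cond5 φ]
    simp only [show (0 + 1 : ZMod 11) = (1 : ZMod 11) from rfl,
      show (0 + 2 : ZMod 11) = (2 : ZMod 11) from rfl,
      show (0 + 3 : ZMod 11) = (3 : ZMod 11) from rfl,
      show (0 + 4 : ZMod 11) = (4 : ZMod 11) from rfl,
      show (0 + 5 : ZMod 11) = (5 : ZMod 11) from rfl,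
      show (1 + 1 : ZMod 11) = (2 : ZMod 11) from rfl,
      show (1 + 2 : ZMod 11) = (3 : ZMod 11) from rfl,
      show (1 + 3 : ZMod 11) = (4 : ZMod 11) from rfl,
      show (1 + 4 : ZMod 11) = (5 : ZMod 11) from rfl,
      show (1 + 5 : ZMod 11) = (6 : ZMod 11) from rfl,
      show (2 + 1 : ZMod 11) = (3 : ZMod 11) from rfl,
      show (2 + 2 : ZMod 11) = (4 : ZMod 11) from rfl,
      show (2 + 3 : ZMod 11) = (5 : ZMod 11) from rfl,
      show (2 + 4 : ZMod 11) = (6 : ZMod 11) from rfl,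
      show (2 + 5 : ZMod 11) = (7 : ZMod 11) from rfl,
      show (3 + 1 : ZMod 11) = (4 : ZMod 11) from rfl,
      show (3 + 2 : ZMod 11) = (5 : ZMod 11) from rfl,
      show (3 + 3 : ZMod 11) = (6 : ZMod 11) from rfl,
      show (3 + 4 : ZMod 11) = (7 : ZMod 11) from rfl,
      show (3 + 5 : ZMod 11) = (8 : ZMod 11) from rfl,
      show (4 + 1 : ZMod 11) = (5 : ZMod 11) from rfl,
      show (4 + 2 : ZMod 11) = (6 : ZMod 11) from rfl,
      show (4 + 3 : ZMod 11) = (7 : ZMod 11) from rfl,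
      show (4 + 4 : ZMod 11) = (8 : ZMod 11) from rfl,
      show (4 + 5 : ZMod 11) = (9 : ZMod 11) from rfl,
      show (5 + 1 : ZMod 11) = (6 : ZMod 11) from rfl,
      show (5 + 2 : ZMod 11) = (7 : ZMod 11) from rfl,
      show (5 + 3 : ZMod 11) = (8 : ZMod 11) from rfl,
      show (5 + 4 : ZMod 11) = (9 : ZMod 11) from rfl,
      show (5 + 5 : ZMod 11) = (10 : ZMod 11) from rfl,
      show (6 + 1 : ZMod 11) = (7 : ZMod 11) from rfl,
      show (6 + 2 : ZMod 11) = (8 : ZMod 11) from rfl,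
      show (6 + 3 : ZMod 11) = (9 : ZMod 11) from rfl,
      show (6 + 4 : ZMod 11) = (10 : ZMod 11) from rfl,
      show (6 + 5 : ZMod 11) = (0 : ZMod 11) from rfl,
      show (7 + 1 : ZMod 11) = (8 : ZMod 11) from rfl,
      show (7 + 2 : ZMod 11) = (9 : ZMod 11) from rfl,
      show (7 + 3 : ZMod 11) = (10 : ZMod 11) from rfl,
      show (7 + 4 : ZMod 11) = (0 : ZMod 11) from rfl,
      show (7 + 5 : ZMod 11) = (1 : ZMod 11) from rfl,
      show (8 + 1 : ZMod 11) = (9 : ZMod 11) from rfl,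
      show (8 + 2 : ZMod 11) = (10 : ZMod 11) from rfl,
      show (8 + 3 : ZMod 11) = (0 : ZMod 11) from rfl,
      show (8 + 4 : ZMod 11) = (1 : ZMod 11) from rfl,
      show (8 + 5 : ZMod 11) = (2 : ZMod 11) from rfl,
      show (9 + 1 : ZMod 11) = (10 : ZMod 11) from rfl,
      show (9 + 2 : ZMod 11) = (0 : ZMod 11) from rfl,
      show (9 + 3 : ZMod 11) = (1 : ZMod 11) from rfl,
      show (9 + 4 : ZMod 11) = (2 : ZMod 11) from rfl,
      show (9 + 5 : ZMod 11) = (3 : ZMod 11) from rfl,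
      show (10 + 1 : ZMod 11) = (0 : ZMod 11) from rfl,
      show (10 + 2 : ZMod 11) = (1 : ZMod 11) from rfl,
      show (10 + 3 : ZMod 11) = (2 : ZMod 11) from rfl,
      show (10 + 4 : ZMod 11) = (3 : ZMod 11) from rfl,
      show (10 + 5 : ZMod 11) = (4 : ZMod 11) from rfl]
    exact Hi
  have kq : (14 : ℚ) * (Finset.univ.filter (fun v : ZMod 11 => φ v = φ (v + 4))).card
      + 27 * (Finset.univ.filter (fun v : ZMod 11 => φ v = φ (v + 5))).card + 1
      ≤ 30 * (Finset.univ.filter (fun v : ZMod 11 => φ v = φ (v + 2))).card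
      + 11 * (Finset.univ.filter (fun v : ZMod 11 => φ v = φ (v + 3))).card := by
    exact_mod_cast key_nat
  linarith
end

section
/- Let Φ be a random 3-coloring of the 11-node cycle that is non-signaling beyond distance 1, and suppose Φ is proper with probability 1. Then a contradiction follows: no such Φ exists. (Consequently no quantum single-round one-way distributed algorithm perfectly 3-colors the 11-node ring.) -/
set_option maxRecDepth 20000

/-! ### Auxiliary machinery -/

/-- Indicator for equality of two colors. -/
def b (x y : Fin 3) : ℕ := if x = y then 1 else 0

/-- The number of vertices `v` with `φ v = φ (v + d)`. -/
def nd (φ : ZMod 11 → Fin 3) (d : ZMod 11) : ℕ :=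
  (Finset.univ.filter fun v : ZMod 11 => φ v = φ (v + d)).card

/-- Finite check over all proper 3-colorings of the 11-cycle. -/
theorem key11 : ∀ c0 c1 : Fin 3, c0 ≠ c1 → ∀ c2, c1 ≠ c2 → ∀ c3, c2 ≠ c3 → ∀ c4, c3 ≠ c4 →
    ∀ c5, c4 ≠ c5 → ∀ c6, c5 ≠ c6 → ∀ c7, c6 ≠ c7 → ∀ c8, c7 ≠ c8 → ∀ c9, c8 ≠ c9 →
    ∀ c10, c9 ≠ c10 → c10 ≠ c0 →
    14 * (b c0 c4 + b c1 c5 + b c2 c6 + b c3 c7 + b c4 c8 + b c5 c9 + b c6 c10 + b c7 c0 + b c8 c1 + b c9 c2 + b c10 c3)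
    + 27 * (b c0 c5 + b c1 c6 + b c2 c7 + b c3 c8 + b c4 c9 + b c5 c10 + b c6 c0 + b c7 c1 + b c8 c2 + b c9 c3 + b c10 c4)
    + 1 ≤
    30 * (b c0 c2 + b c1 c3 + b c2 c4 + b c3 c5 + b c4 c6 + b c5 c7 + b c6 c8 + b c7 c9 + b c8 c10 + b c9 c0 + b c10 c1)
    + 11 * (b c0 c3 + b c1 c4 + b c2 c5 + b c3 c6 + b c4 c7 + b c5 c8 + b c6 c9 + b c7 c10 + b c8 c0 + b c9 c1 + b c10 c2) := by
  decide

lemma univ_expand : (Finset.univ : Finset (ZMod 11)) =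
    ({0,1,2,3,4,5,6,7,8,9,10} : Finset (ZMod 11)) := by decide

lemma sum_expand (g : ZMod 11 → ℕ) : ∑ v : ZMod 11, g v =
    g 0 + g 1 + g 2 + g 3 + g 4 + g 5 + g 6 + g 7 + g 8 + g 9 + g 10 := by
  rw [univ_expand]
  rw [Finset.sum_insert (by decide), Finset.sum_insert (by decide),
    Finset.sum_insert (by decide), Finset.sum_insert (by decide),
    Finset.sum_insert (by decide), Finset.sum_insert (by decide),
    Finset.sum_insert (by decide), Finset.sum_insert (by decide),
    Finset.sum_insert (by decide), Finset.sum_insert (by decide),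
    Finset.sum_singleton]
  ring

lemma nd_expand (φ : ZMod 11 → Fin 3) (d : ZMod 11) :
    nd φ d = ∑ v : ZMod 11, b (φ v) (φ (v + d)) := by
  rw [nd, Finset.card_filter]; rfl

lemma natkey (φ : ZMod 11 → Fin 3) (hp : ∀ v : ZMod 11, φ v ≠ φ (v + 1)) :
    14 * nd φ 4 + 27 * nd φ 5 + 1 ≤ 30 * nd φ 2 + 11 * nd φ 3 := by
  have h := key11 (φ 0) (φ 1) (hp 0) (φ 2) (hp 1) (φ 3) (hp 2) (φ 4) (hp 3) (φ 5) (hp 4)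
    (φ 6) (hp 5) (φ 7) (hp 6) (φ 8) (hp 7) (φ 9) (hp 8) (φ 10) (hp 9) (hp 10)
  rw [nd_expand φ 2, nd_expand φ 3, nd_expand φ 4, nd_expand φ 5,
    sum_expand, sum_expand, sum_expand, sum_expand]
  exact h

lemma frame_pair (v : ZMod 11) : frameSet 11 1 v 1 = ({v - 1, v} : Finset (ZMod 11)) := by
  show (Finset.range 2).image _ = _
  rw [show Finset.range 2 = {0, 1} from rfl]
  rw [Finset.image_insert, Finset.image_singleton]
  simp

lemma pair_placement {v w : ZMod 11} (h0 : w - v ≠ 0) (h1 : w - v ≠ 1) (hm : w - v ≠ -1) :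
    IsPlacement 11 1 (fun _ : Fin 2 => 1) ![v, w] := by
  have hd : Disjoint (frameSet 11 1 v 1) (frameSet 11 1 w 1) := by
    rw [frame_pair, frame_pair, Finset.disjoint_left]
    intro x hx hx'
    simp only [Finset.mem_insert, Finset.mem_singleton] at hx hx'
    rcases hx with h1'|h1' <;> rcases hx' with h2'|h2'
    · exact h0 (by linear_combination h1' - h2')
    · exact hm (by linear_combination h1' - h2')
    · exact h1 (by linear_combination h1' - h2')
    · exact h0 (by linear_combination h1' - h2')
  intro j j' hne
  fin_cases j <;> fin_cases j' <;>
    first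
      | exact absurd rfl hne
      | simpa using hd
      | simpa using hd.symm

lemma jointProb_pair (P : (ZMod 11 → Fin 3) → ℝ) (v w : ZMod 11) (c : Fin 3) :
    jointProb P (fun _ : Fin 2 => 1) ![v, w] (fun _ _ => c) =
      ∑ φ : ZMod 11 → Fin 3, if (φ v = c ∧ φ w = c) then P φ else 0 := by
  rw [jointProb, Finset.sum_filter]
  refine Finset.sum_congr rfl fun φ _ => ?_
  by_cases h : φ v = c ∧ φ w = c
  · rw [if_pos ?_, if_pos h]
    intro j i
    have hi : (i : ℕ) = 0 := by omega
    fin_cases j <;> simp [hi] <;> [exact h.1; exact h.2]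
  · rw [if_neg ?_, if_neg h]
    intro hall
    exact h ⟨by simpa using hall 0 0, by simpa using hall 1 0⟩

lemma sum_ind (a b' : Fin 3) (x : ℝ) :
    (∑ c : Fin 3, if (a = c ∧ b' = c) then x else 0) = if a = b' then x else 0 := by
  by_cases hab : a = b'
  · subst hab
    simp only [and_self]
    rw [Finset.sum_ite_eq]
    simp
  · have h : ∀ c : Fin 3, ¬(a = c ∧ b' = c) := fun c ⟨h1, h2⟩ => hab (h1.trans h2.symm)
    simp [h, hab]

/-- there is no random 3-coloring of the 11-node cycle that is non-signaling
beyond distance 1 and proper with probability 1. -/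
theorem no_perfect_nonsignaling_coloring_11cycle
    (P : (ZMod 11 → Fin 3) → ℝ)
    (hnonneg : ∀ φ, 0 ≤ P φ) (hsum : ∑ φ : ZMod 11 → Fin 3, P φ = 1)
    (hns : NonSignalingBeyond 11 1 P)
    (hproper : ∀ φ, P φ ≠ 0 → ∀ v : ZMod 11, φ v ≠ φ (v + 1)) :
    False := by
  set Q : ℝ := ∑ c : Fin 3, jointProb P (fun _ : Fin 2 => 1) ![(0 : ZMod 11), 2] (fun _ _ => c) with hQ
  -- the expectation of nd at any admissible distance is 11 * Q
  have hS : ∀ d : ZMod 11, d ≠ 0 → d ≠ 1 → d ≠ -1 →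
      ∑ φ : ZMod 11 → Fin 3, P φ * (nd φ d : ℝ) = 11 * Q := by
    intro d hd0 hd1 hdm
    have pl1 : ∀ v : ZMod 11, IsPlacement 11 1 (fun _ : Fin 2 => 1) ![v, v + d] := by
      intro v
      refine pair_placement ?_ ?_ ?_ <;> rw [add_sub_cancel_left] <;> assumption
    have pl2 : IsPlacement 11 1 (fun _ : Fin 2 => 1) ![(0 : ZMod 11), 2] :=
      pair_placement (by decide) (by decide) (by decide)
    calc ∑ φ : ZMod 11 → Fin 3, P φ * (nd φ d : ℝ)
        = ∑ φ : ZMod 11 → Fin 3, ∑ v : ZMod 11,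
            (if φ v = φ (v + d) then P φ else 0) := by
          refine Finset.sum_congr rfl fun φ _ => ?_
          rw [nd, Finset.card_filter]
          push_cast
          rw [Finset.mul_sum]
          exact Finset.sum_congr rfl fun v _ => by rw [mul_ite, mul_one, mul_zero]
      _ = ∑ v : ZMod 11, ∑ φ : ZMod 11 → Fin 3,
            (if φ v = φ (v + d) then P φ else 0) := Finset.sum_comm
      _ = ∑ v : ZMod 11, ∑ φ : ZMod 11 → Fin 3, ∑ c : Fin 3,
            (if (φ v = c ∧ φ (v + d) = c) then P φ else 0) := by
          exact Finset.sum_congr rfl fun v _ => Finset.sum_congr rfl fun φ _ =>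
            (sum_ind (φ v) (φ (v + d)) (P φ)).symm
      _ = ∑ v : ZMod 11, ∑ c : Fin 3, ∑ φ : ZMod 11 → Fin 3,
            (if (φ v = c ∧ φ (v + d) = c) then P φ else 0) :=
          Finset.sum_congr rfl fun v _ => Finset.sum_comm
      _ = ∑ v : ZMod 11, ∑ c : Fin 3,
            jointProb P (fun _ : Fin 2 => 1) ![v, v + d] (fun _ _ => c) :=
          Finset.sum_congr rfl fun v _ => Finset.sum_congr rfl fun c _ =>
            (jointProb_pair P v (v + d) c).symm
      _ = ∑ v : ZMod 11, ∑ c : Fin 3,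
            jointProb P (fun _ : Fin 2 => 1) ![(0 : ZMod 11), 2] (fun _ _ => c) :=
          Finset.sum_congr rfl fun v _ => Finset.sum_congr rfl fun c _ =>
            hns.2 2 (fun _ => 1) ![v, v + d] ![(0 : ZMod 11), 2] (pl1 v) pl2 (fun _ _ => c)
      _ = 11 * Q := by
          rw [← hQ, Finset.sum_const, Finset.card_univ, ZMod.card, nsmul_eq_mul]
          norm_num
  have h2 := hS 2 (by decide) (by decide) (by decide)
  have h3 := hS 3 (by decide) (by decide) (by decide)
  have h4 := hS 4 (by decide) (by decide) (by decide)
  have h5 := hS 5 (by decide) (by decide) (by decide)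
  -- pointwise inequality and summation
  have hle : ∑ φ : ZMod 11 → Fin 3, P φ * (14 * (nd φ 4 : ℝ) + 27 * (nd φ 5 : ℝ) + 1)
      ≤ ∑ φ : ZMod 11 → Fin 3, P φ * (30 * (nd φ 2 : ℝ) + 11 * (nd φ 3 : ℝ)) := by
    refine Finset.sum_le_sum fun φ _ => ?_
    by_cases hP : P φ = 0
    · simp [hP]
    · have hnat := natkey φ (hproper φ hP)
      have hr : 14 * (nd φ 4 : ℝ) + 27 * (nd φ 5 : ℝ) + 1
          ≤ 30 * (nd φ 2 : ℝ) + 11 * (nd φ 3 : ℝ) := by exact_mod_cast hnat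
      exact mul_le_mul_of_nonneg_left hr (hnonneg φ)
  have hL : ∑ φ : ZMod 11 → Fin 3, P φ * (14 * (nd φ 4 : ℝ) + 27 * (nd φ 5 : ℝ) + 1)
      = 14 * (∑ φ : ZMod 11 → Fin 3, P φ * (nd φ 4 : ℝ))
        + 27 * (∑ φ : ZMod 11 → Fin 3, P φ * (nd φ 5 : ℝ))
        + ∑ φ : ZMod 11 → Fin 3, P φ := by
    rw [Finset.mul_sum, Finset.mul_sum, ← Finset.sum_add_distrib, ← Finset.sum_add_distrib]
    exact Finset.sum_congr rfl fun φ _ => by ring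
  have hR : ∑ φ : ZMod 11 → Fin 3, P φ * (30 * (nd φ 2 : ℝ) + 11 * (nd φ 3 : ℝ))
      = 30 * (∑ φ : ZMod 11 → Fin 3, P φ * (nd φ 2 : ℝ))
        + 11 * (∑ φ : ZMod 11 → Fin 3, P φ * (nd φ 3 : ℝ)) := by
    rw [Finset.mul_sum, Finset.mul_sum, ← Finset.sum_add_distrib]
    exact Finset.sum_congr rfl fun φ _ => by ring
  rw [hL, hR, h2, h3, h4, h5, hsum] at hle
  linarith
end
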